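/- arXiv:2603.04556 — 4 statements merged into one kernel-verified Lean document; each statement's English description precedes it below -/
import Mathlib

section
/- Fix an integer G ≥ 1, a nonempty finite set M (memory states), and a nonempty set J̃ ⊆ [0,∞) (allowed rates). For each a ∈ {1,…,G} let γ^{(a)}: M → J̃ × J̃ be a parameter-update function, writing γ^{(a)}_i(m) ∈ J̃ for its components (i ∈ {0,1}), and let u: M × {1,…,G} × {0,1} → M be an arbitrary memory-update function. Consider the continuous-time Markov chain on the finite state space V = {0,1}^G × M whose only nonzero jump rates are, for each a ∈ {1,…,G} and each (c,m) ∈ V, a jump from (c,m) to (c ⊕ e_a, u(m,a,c_a)) at rate γ^{(a)}_{c_a}(m), where c ⊕ e_a denotes c with its a-th bit flipped (for distinct a these target states are distinct, so the rate matrix is well defined); in particular the escape rate from (c,m) is Γ_{(c,m)} = Σ_{a=1}^G γ^{(a)}_{c_a}(m). Let p be any stationary distribution of this chain, let w be arbitrary real weights on the jumps, and let F, D and S = F²/D be the asymptotic average current, noise and signal-to-noise ratio (assume the improper integral defining D converges entrywise and D > 0). Then S ≤ max_{m∈M} max_{i∈{0,1}^G} Σ_{a=1}^G γ^{(a)}_{i_a}(m).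 -/
open Matrix MeasureTheory

/-- The rate matrix of a continuous-time Markov chain with off-diagonal entries
`R j i` (the rate of jumps from state `i` to state `j`, for `j ≠ i`) and diagonal
entries minus the escape rates `Γ_i = Σ_{j ≠ i} R j i`. -/
noncomputable def ctmcRateMatrix {V : Type} [Fintype V] [DecidableEq V]
    (R : V → V → ℝ) : Matrix V V ℝ :=
  Matrix.of fun j i => if j = i then -(∑ k, if k = i then (0 : ℝ) else R k i) else R j i

/-- The matrix `C` with entries `C j i = w j i * R j i` off the diagonal and zero diagonal. -/
noncomputable def ctmcCurrentMatrix {V : Type} [Fintype V] [DecidableEq V]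
    (R w : V → V → ℝ) : Matrix V V ℝ :=
  Matrix.of fun j i => if j = i then 0 else w j i * R j i

/-- The asymptotic average current `F = 1ᵀ C p`. -/
noncomputable def ctmcAvgCurrent {V : Type} [Fintype V] [DecidableEq V]
    (R w : V → V → ℝ) (p : V → ℝ) : ℝ :=
  (fun _ => (1 : ℝ)) ⬝ᵥ (ctmcCurrentMatrix R w *ᵥ p)

/-- The integrand `e^{Lτ} − p·1ᵀ` of the improper integral appearing in the noise. -/
noncomputable def ctmcNoiseIntegrand {V : Type} [Fintype V] [DecidableEq V]
    (R : V → V → ℝ) (p : V → ℝ) (τ : ℝ) : Matrix V V ℝ :=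
  NormedSpace.exp (τ • ctmcRateMatrix R) - Matrix.vecMulVec p (fun _ => 1)

/-- Entrywise convergence of the improper integral `∫₀^∞ (e^{Lτ} − p·1ᵀ) dτ`. -/
def ctmcNoiseConv {V : Type} [Fintype V] [DecidableEq V]
    (R : V → V → ℝ) (p : V → ℝ) : Prop :=
  ∀ j i, IntegrableOn (fun τ : ℝ => ctmcNoiseIntegrand R p τ j i) (Set.Ioi 0)

/-- The matrix `∫₀^∞ (e^{Lτ} − p·1ᵀ) dτ`, computed entrywise. -/
noncomputable def ctmcNoiseQ {V : Type} [Fintype V] [DecidableEq V]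
    (R : V → V → ℝ) (p : V → ℝ) : Matrix V V ℝ :=
  Matrix.of fun j i => ∫ τ in Set.Ioi (0 : ℝ), ctmcNoiseIntegrand R p τ j i

/-- The asymptotic noise `D = 1ᵀ C₂ p + 2·1ᵀ C (∫₀^∞ (e^{Lτ} − p·1ᵀ) dτ) C p`. -/
noncomputable def ctmcNoise {V : Type} [Fintype V] [DecidableEq V]
    (R w : V → V → ℝ) (p : V → ℝ) : ℝ :=
  (fun _ => (1 : ℝ)) ⬝ᵥ (ctmcCurrentMatrix R (fun j i => w j i ^ 2) *ᵥ p)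
    + 2 * ((fun _ => (1 : ℝ)) ⬝ᵥ (ctmcCurrentMatrix R w *ᵥ
        (ctmcNoiseQ R p *ᵥ (ctmcCurrentMatrix R w *ᵥ p))))


section AuxSNR

open Filter

variable {V : Type} [Fintype V] [DecidableEq V]

private def entryLM (j i : V) : Matrix V V ℝ →ₗ[ℝ] ℝ where
  toFun A := A j i
  map_add' _ _ := rfl
  map_smul' _ _ := rfl

private def mulEntryLM (B : Matrix V V ℝ) (j i : V) : Matrix V V ℝ →ₗ[ℝ] ℝ where
  toFun A := (A * B) j i
  map_add' A A' := by simp [Matrix.add_mul]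
  map_smul' c A := by simp [Matrix.smul_mul]

private def mulVecLM (v : V → ℝ) (j : V) : Matrix V V ℝ →ₗ[ℝ] ℝ where
  toFun A := (A *ᵥ v) j
  map_add' A A' := by simp [Matrix.add_mulVec]
  map_smul' c A := by simp [Matrix.smul_mulVec]

private lemma exp_lm_hasDerivAt (L : Matrix V V ℝ) (ψ : Matrix V V ℝ →ₗ[ℝ] ℝ) (τ : ℝ) :
    HasDerivAt (fun t : ℝ => ψ (NormedSpace.exp (t • L)))
      (ψ (NormedSpace.exp (τ • L) * L)) τ := by
  letI : SeminormedRing (Matrix V V ℝ) := Matrix.linftyOpSemiNormedRing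
  letI : NormedRing (Matrix V V ℝ) := Matrix.linftyOpNormedRing
  letI : NormedAlgebra ℝ (Matrix V V ℝ) := Matrix.linftyOpNormedAlgebra
  have h := hasDerivAt_exp_smul_const (𝕂 := ℝ) L τ
  have := ((LinearMap.toContinuousLinearMap ψ).hasFDerivAt).comp_hasDerivAt τ h
  exact this

private lemma integrableOn_limit_zero {f : ℝ → ℝ} (hf : IntegrableOn f (Set.Ioi 0)) {c : ℝ}
    (hc : Tendsto f atTop (nhds c)) : c = 0 := by
  by_contra h
  have hpos : 0 < |c| / 2 := by positivity
  have hev : ∀ᶠ x in atTop, |c| / 2 ≤ ‖f x‖ := by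
    filter_upwards [hc (Metric.ball_mem_nhds c hpos)] with x hx
    have h1 : |f x - c| < |c| / 2 := by simpa [Real.dist_eq] using hx
    have h2 := abs_sub_abs_le_abs_sub c (f x)
    rw [abs_sub_comm] at h2
    simp only [Real.norm_eq_abs]
    linarith
  obtain ⟨T, hT⟩ := eventually_atTop.mp hev
  set M := max T 0 with hM
  have hsub : IntegrableOn f (Set.Ioi M) volume :=
    hf.mono_set (Set.Ioi_subset_Ioi (le_max_right _ _))
  have hconst : IntegrableOn (fun _ : ℝ => |c| / 2) (Set.Ioi M) volume := by
    refine Integrable.mono' hsub.norm aestronglyMeasurable_const ?_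
    refine (ae_restrict_iff' measurableSet_Ioi).2 (ae_of_all _ fun x hx => ?_)
    have : T ≤ x := le_of_lt (lt_of_le_of_lt (le_max_left _ _) hx)
    simpa [abs_of_nonneg (le_of_lt hpos)] using hT x this
  rw [integrableOn_const_iff] at hconst
  rcases hconst with h1 | h1
  · exact absurd (enorm_eq_zero.mp h1) (ne_of_gt hpos)
  · simp [Real.volume_Ioi] at h1

private lemma exp_mulVec_stationary {L : Matrix V V ℝ} {p : V → ℝ} (hLp : L *ᵥ p = 0) (τ : ℝ) :
    NormedSpace.exp (τ • L) *ᵥ p = p := by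
  funext j
  have hd : ∀ t : ℝ, HasDerivAt (fun t : ℝ => (NormedSpace.exp (t • L) *ᵥ p) j) 0 t := by
    intro t
    have h := exp_lm_hasDerivAt L (mulVecLM p j) t
    have h0 : (mulVecLM p j) (NormedSpace.exp (t • L) * L) = 0 := by
      simp only [mulVecLM, LinearMap.coe_mk, AddHom.coe_mk]
      rw [← Matrix.mulVec_mulVec, hLp]
      simp
    rw [h0] at h
    exact h
  have hconst := is_const_of_deriv_eq_zero
    (fun t => (hd t).differentiableAt) (fun t => (hd t).deriv) τ 0
  have h0 : (NormedSpace.exp ((0:ℝ) • L) *ᵥ p) j = p j := by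
    rw [zero_smul, NormedSpace.exp_zero, Matrix.one_mulVec]
  rw [show (NormedSpace.exp (τ • L) *ᵥ p) j = _ from hconst, h0]

private lemma rate_col_sum (R : V → V → ℝ) (i : V) : ∑ j, ctmcRateMatrix R j i = 0 := by
  simp only [ctmcRateMatrix, Matrix.of_apply]
  have : ∀ j, (if j = i then -(∑ k, if k = i then (0:ℝ) else R k i) else R j i)
      = (if j = i then -(∑ k, if k = i then (0:ℝ) else R k i) else 0)
        + (if j = i then 0 else R j i) := by
    intro j; by_cases h : j = i <;> simp [h]
  rw [Finset.sum_congr rfl fun j _ => this j, Finset.sum_add_distrib,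
    Finset.sum_ite_eq' Finset.univ i]
  simp

private lemma noiseQ_vecMul_p (R : V → V → ℝ) (p : V → ℝ)
    (hconv : ctmcNoiseConv R p) (hp1 : ∑ x, p x = 1)
    (hpstat : ctmcRateMatrix R *ᵥ p = 0) (l : V) :
    ∑ j, ctmcNoiseQ R p l j * p j = 0 := by
  have key : ∀ τ : ℝ, ∑ j, ctmcNoiseIntegrand R p τ l j * p j = 0 := by
    intro τ
    have h1 : ∑ j, NormedSpace.exp (τ • ctmcRateMatrix R) l j * p j = p l := by
      have := congrFun (exp_mulVec_stationary hpstat τ) l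
      simpa [Matrix.mulVec, dotProduct] using this
    have h2 : ∑ j, Matrix.vecMulVec p (fun _ => (1:ℝ)) l j * p j = p l := by
      simp [Matrix.vecMulVec_apply, ← Finset.mul_sum, hp1]
    simp [ctmcNoiseIntegrand, Matrix.sub_apply, sub_mul, Finset.sum_sub_distrib, h1, h2]
  have he : ∑ j, ctmcNoiseQ R p l j * p j
      = ∫ τ in Set.Ioi (0:ℝ), ∑ j, ctmcNoiseIntegrand R p τ l j * p j := by
    simp only [ctmcNoiseQ, Matrix.of_apply]
    rw [integral_finset_sum _ (fun j _ => (hconv l j).mul_const _)]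
    exact Finset.sum_congr rfl fun j _ => (integral_mul_const _ _).symm
  rw [he]
  simp [key]

private lemma noiseQ_mul_rate (R : V → V → ℝ) (p : V → ℝ)
    (hconv : ctmcNoiseConv R p) (l i : V) :
    ∑ j, ctmcNoiseQ R p l j * ctmcRateMatrix R j i
      = p l - (if l = i then 1 else 0) := by
  set L := ctmcRateMatrix R with hLdef
  have key : ∀ τ : ℝ, ∑ j, ctmcNoiseIntegrand R p τ l j * L j i
      = (NormedSpace.exp (τ • L) * L) l i := by
    intro τ
    have h1 : ∑ j, NormedSpace.exp (τ • L) l j * L j i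
        = (NormedSpace.exp (τ • L) * L) l i := (Matrix.mul_apply).symm
    have h2 : ∑ j, Matrix.vecMulVec p (fun _ => (1:ℝ)) l j * L j i = 0 := by
      simp only [Matrix.vecMulVec_apply, mul_one]
      rw [← Finset.mul_sum, rate_col_sum, mul_zero]
    simp [ctmcNoiseIntegrand, Matrix.sub_apply, sub_mul, Finset.sum_sub_distrib, h1, h2]
    rw [← hLdef]
    exact h1
  have hint : IntegrableOn (fun τ : ℝ => (NormedSpace.exp (τ • L) * L) l i)
      (Set.Ioi (0:ℝ)) := by
    have h := integrable_finset_sum (μ := volume.restrict (Set.Ioi (0:ℝ)))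
      Finset.univ (fun j (_ : j ∈ Finset.univ) => (hconv l j).mul_const (L j i))
    exact h.congr (ae_of_all _ key)
  have hQL : ∑ j, ctmcNoiseQ R p l j * L j i
      = ∫ τ in Set.Ioi (0:ℝ), (NormedSpace.exp (τ • L) * L) l i := by
    simp only [ctmcNoiseQ, Matrix.of_apply]
    rw [Finset.sum_congr rfl fun j (_ : j ∈ Finset.univ) => (integral_mul_const (L j i) _).symm,
      ← integral_finset_sum _ (fun j _ => (hconv l j).mul_const _)]
    simp only [key]
  set I : ℝ := ∫ τ in Set.Ioi (0:ℝ), (NormedSpace.exp (τ • L) * L) l i with hI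
  have hder : ∀ τ : ℝ, HasDerivAt (fun t : ℝ => NormedSpace.exp (t • L) l i)
      ((NormedSpace.exp (τ • L) * L) l i) τ := by
    intro τ
    have h := exp_lm_hasDerivAt L (entryLM l i) τ
    exact h
  have hcont : Continuous (fun τ : ℝ => (NormedSpace.exp (τ • L) * L) l i) := by
    refine continuous_iff_continuousAt.2 fun τ => ?_
    have h := (exp_lm_hasDerivAt L (mulEntryLM L l i) τ).continuousAt
    simpa [mulEntryLM] using h
  have hFTC : ∀ T : ℝ, ∫ τ in (0:ℝ)..T, (NormedSpace.exp (τ • L) * L) l i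
      = NormedSpace.exp (T • L) l i - NormedSpace.exp ((0:ℝ) • L) l i := fun T =>
    intervalIntegral.integral_eq_sub_of_hasDerivAt (fun τ _ => hder τ)
      (hcont.intervalIntegrable 0 T)
  have htend := intervalIntegral_tendsto_integral_Ioi 0 hint tendsto_id
  have htend2 : Tendsto (fun T : ℝ => NormedSpace.exp (T • L) l i) atTop
      (nhds (I + NormedSpace.exp ((0:ℝ) • L) l i)) := by
    have h1 : Tendsto (fun T : ℝ =>
        NormedSpace.exp (T • L) l i - NormedSpace.exp ((0:ℝ) • L) l i) atTop (nhds I) := by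
      simpa only [id, hFTC] using htend
    simpa using h1.add_const (NormedSpace.exp ((0:ℝ) • L) l i)
  have hg : Tendsto (fun T : ℝ => ctmcNoiseIntegrand R p T l i) atTop
      (nhds (I + NormedSpace.exp ((0:ℝ) • L) l i - p l * 1)) := by
    have := htend2.sub_const (p l * 1)
    simpa [ctmcNoiseIntegrand, Matrix.sub_apply, Matrix.vecMulVec_apply] using this
  have hzero := integrableOn_limit_zero (hconv l i) hg
  have h00 : NormedSpace.exp ((0:ℝ) • L) l i = (if l = i then (1:ℝ) else 0) := by
    rw [zero_smul, NormedSpace.exp_zero, Matrix.one_apply]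
  rw [hQL]
  rw [h00] at hzero
  linarith

end AuxSNR

/-- **Theorem 1 (classical no-go bound).**
For `G ≥ 1` two-dimensional classical clockworks controlled by a feedback policy with finite
nonempty memory `M`, allowed rates in a nonempty set `J̃ ⊆ [0,∞)`, parameter-update functions
`γ⁽ᵃ⁾ : M → J̃ × J̃` and an arbitrary memory-update function `u`, consider the continuous-time
Markov chain on `{0,1}^G × M` whose only jumps are `(c,m) → (c ⊕ eₐ, u(m,a,cₐ))` at rate
`γ⁽ᵃ⁾_{cₐ}(m)`. For any stationary distribution `p`, any real weights `w` on the jumps and the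
resulting asymptotic average current `F`, noise `D > 0` (with the noise integral convergent
entrywise) and signal-to-noise ratio `S = F²/D`, one has
`S ≤ max_{m∈M} max_{i∈{0,1}^G} Σₐ γ⁽ᵃ⁾_{iₐ}(m)`. -/
theorem classical_snr_bound
    (G : ℕ) (hG : 1 ≤ G)
    (M : Type) [Fintype M] [DecidableEq M] [Nonempty M]
    (Jt : Set ℝ) (hJtne : Jt.Nonempty) (hJtsub : Jt ⊆ Set.Ici 0)
    (γ : Fin G → M → Bool → ℝ) (hγ : ∀ a m i, γ a m i ∈ Jt)
    (u : M → Fin G → Bool → M)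
    -- the jump rates of the chain on `{0,1}^G × M`
    (R : ((Fin G → Bool) × M) → ((Fin G → Bool) × M) → ℝ)
    (hR : ∀ x' x : (Fin G → Bool) × M, R x' x =
      ∑ a : Fin G,
        if x'.1 = Function.update x.1 a (!(x.1 a)) ∧ x'.2 = u x.2 a (x.1 a)
        then γ a x.2 (x.1 a) else 0)
    -- a stationary distribution
    (p : ((Fin G → Bool) × M) → ℝ)
    (hp0 : ∀ x, 0 ≤ p x) (hp1 : ∑ x, p x = 1)
    (hpstat : ctmcRateMatrix R *ᵥ p = 0)
    -- arbitrary real weights on the jumps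
    (w : ((Fin G → Bool) × M) → ((Fin G → Bool) × M) → ℝ)
    -- convergence of the improper integral defining the noise, and positivity of the noise
    (hconv : ctmcNoiseConv R p)
    (hD : 0 < ctmcNoise R w p) :
    ctmcAvgCurrent R w p ^ 2 / ctmcNoise R w p ≤
      Finset.univ.sup' Finset.univ_nonempty
        (fun mi : M × (Fin G → Bool) => ∑ a, γ a mi.1 (mi.2 a)) := by
  classical
  set S : ℝ := Finset.univ.sup' Finset.univ_nonempty
      (fun mi : M × (Fin G → Bool) => ∑ a, γ a mi.1 (mi.2 a)) with hSdef
  set R' : ((Fin G → Bool) × M) → ((Fin G → Bool) × M) → ℝ :=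
    fun j i => if j = i then 0 else R j i with hR'def
  set Γ : ((Fin G → Bool) × M) → ℝ := fun i => ∑ k, R' k i with hΓdef
  set φ : ((Fin G → Bool) × M) → ℝ :=
    fun j => ∑ k, ∑ l, ctmcCurrentMatrix R w k l * ctmcNoiseQ R p l j with hφdef
  set v : ((Fin G → Bool) × M) → ((Fin G → Bool) × M) → ℝ :=
    fun j i => w j i + φ j - φ i with hvdef
  -- nonnegativity of the jump rates
  have hRnn : ∀ j i, 0 ≤ R j i := by
    intro j i
    rw [hR j i]
    refine Finset.sum_nonneg fun a _ => ?_
    split_ifs with h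
    · exact hJtsub (hγ a i.2 (i.1 a))
    · exact le_rfl
  have hR'nn : ∀ j i, 0 ≤ R' j i := by
    intro j i; simp only [hR'def]; split_ifs
    · exact le_rfl
    · exact hRnn j i
  -- the diagonal of `R` vanishes
  have hRdiag : ∀ x, R x x = 0 := by
    intro x
    rw [hR x x]
    refine Finset.sum_eq_zero fun a _ => ?_
    rw [if_neg]
    rintro ⟨h1, -⟩
    have h2 := congrFun h1 a
    rw [Function.update_self] at h2
    simp at h2
  -- basic entry formulas
  have hC : ∀ j i, ctmcCurrentMatrix R w j i = w j i * R' j i := by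
    intro j i
    simp only [ctmcCurrentMatrix, Matrix.of_apply, hR'def]
    by_cases h : j = i <;> simp [h]
  have hC2 : ∀ j i, ctmcCurrentMatrix R (fun j i => w j i ^ 2) j i = w j i ^ 2 * R' j i := by
    intro j i
    simp only [ctmcCurrentMatrix, Matrix.of_apply, hR'def]
    by_cases h : j = i <;> simp [h]
  have hLeq : ∀ j i, ctmcRateMatrix R j i = R' j i + (if j = i then -Γ i else 0) := by
    intro j i
    simp only [ctmcRateMatrix, Matrix.of_apply, hR'def, hΓdef]
    by_cases h : j = i <;> simp [h]
  -- stationarity, entrywise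
  have hstat : ∀ j, ∑ i, R' j i * p i = Γ j * p j := by
    intro j
    have h0 : ∑ i, ctmcRateMatrix R j i * p i = 0 := by
      have := congrFun hpstat j
      simpa [Matrix.mulVec, dotProduct] using this
    have h1 : ∑ i, ctmcRateMatrix R j i * p i
        = (∑ i, R' j i * p i) - Γ j * p j := by
      rw [Finset.sum_congr rfl (fun i (_ : i ∈ Finset.univ) => by
        rw [hLeq j i, add_mul]), Finset.sum_add_distrib]
      have h2 : ∑ i, (if j = i then -Γ i else 0) * p i = -(Γ j * p j) := by
        rw [Finset.sum_congr rfl (fun i (_ : i ∈ Finset.univ) => by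
          rw [ite_mul, zero_mul]), Finset.sum_ite_eq Finset.univ j (fun i => -Γ i * p i)]
        simp
      rw [h2]; ring
    linarith
  -- the average current as a double sum
  have hFeq : ctmcAvgCurrent R w p = ∑ j, ∑ i, w j i * R' j i * p i := by
    simp only [ctmcAvgCurrent, Matrix.mulVec, dotProduct, one_mul]
    exact Finset.sum_congr rfl fun j _ => Finset.sum_congr rfl fun i _ => by rw [hC j i]
  -- the two properties of the matrix Q
  have hQp : ∀ l, ∑ j, ctmcNoiseQ R p l j * p j = 0 :=
    noiseQ_vecMul_p R p hconv hp1 hpstat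
  have hQL : ∀ l i, ∑ j, ctmcNoiseQ R p l j * ctmcRateMatrix R j i
      = p l - (if l = i then 1 else 0) := noiseQ_mul_rate R p hconv
  -- ⟨φ, p⟩ = 0
  have hφp : ∑ j, φ j * p j = 0 := by
    have h1 : ∀ j, φ j * p j
        = ∑ k, ∑ l, ctmcCurrentMatrix R w k l * (ctmcNoiseQ R p l j * p j) := by
      intro j
      simp only [hφdef]
      rw [Finset.sum_mul]
      exact Finset.sum_congr rfl fun k _ => by
        rw [Finset.sum_mul]
        exact Finset.sum_congr rfl fun l _ => by ring
    rw [Finset.sum_congr rfl fun j _ => h1 j, Finset.sum_comm]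
    refine Finset.sum_eq_zero fun k _ => ?_
    rw [Finset.sum_comm]
    refine Finset.sum_eq_zero fun l _ => ?_
    rw [← Finset.mul_sum, hQp l, mul_zero]
  -- the Poisson-type identity  φᵀ L = F·1ᵀ − 1ᵀ C
  have hstarA : ∀ i, ∑ j, φ j * ctmcRateMatrix R j i
      = ctmcAvgCurrent R w p - ∑ j, w j i * R' j i := by
    intro i
    have h1 : ∀ j, φ j * ctmcRateMatrix R j i
        = ∑ k, ∑ l, ctmcCurrentMatrix R w k l
            * (ctmcNoiseQ R p l j * ctmcRateMatrix R j i) := by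
      intro j
      simp only [hφdef]
      rw [Finset.sum_mul]
      exact Finset.sum_congr rfl fun k _ => by
        rw [Finset.sum_mul]
        exact Finset.sum_congr rfl fun l _ => by ring
    rw [Finset.sum_congr rfl fun j _ => h1 j, Finset.sum_comm]
    have h2 : ∀ k, ∑ j, ∑ l, ctmcCurrentMatrix R w k l
          * (ctmcNoiseQ R p l j * ctmcRateMatrix R j i)
        = (∑ l, ctmcCurrentMatrix R w k l * p l) - ctmcCurrentMatrix R w k i := by
      intro k
      rw [Finset.sum_comm]
      have h3 : ∀ l, ∑ j, ctmcCurrentMatrix R w k l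
            * (ctmcNoiseQ R p l j * ctmcRateMatrix R j i)
          = ctmcCurrentMatrix R w k l * p l
            - (if l = i then ctmcCurrentMatrix R w k l else 0) := by
        intro l
        rw [← Finset.mul_sum, hQL l i, mul_sub]
        congr 1
        split_ifs <;> simp
      rw [Finset.sum_congr rfl fun l _ => h3 l, Finset.sum_sub_distrib,
        Finset.sum_ite_eq' Finset.univ i (fun l => ctmcCurrentMatrix R w k l)]
      simp
    rw [Finset.sum_congr rfl fun k _ => h2 k, Finset.sum_sub_distrib]
    congr 1
    · rw [hFeq]
      exact Finset.sum_congr rfl fun k _ => Finset.sum_congr rfl fun l _ => by rw [hC k l]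
    · exact Finset.sum_congr rfl fun k _ => by rw [hC k i]
  -- rewrite φᵀ L directly
  have hstarB : ∀ i, ∑ j, φ j * ctmcRateMatrix R j i
      = (∑ j, φ j * R' j i) - φ i * Γ i := by
    intro i
    rw [Finset.sum_congr rfl (fun j (_ : j ∈ Finset.univ) => by
      rw [hLeq j i, mul_add]), Finset.sum_add_distrib]
    have h2 : ∑ j, φ j * (if j = i then -Γ i else 0) = -(φ i * Γ i) := by
      rw [Finset.sum_congr rfl (fun j (_ : j ∈ Finset.univ) =>
        (by split_ifs <;> simp :
          φ j * (if j = i then -Γ i else 0) = if j = i then -(φ j * Γ i) else 0)),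
        Finset.sum_ite_eq' Finset.univ i (fun j => -(φ j * Γ i))]
      simp
    rw [h2]; ring
  have hAB : ∀ i, (∑ j, φ j * R' j i) - φ i * Γ i
      = ctmcAvgCurrent R w p - ∑ j, w j i * R' j i := by
    intro i
    rw [← hstarB i, hstarA i]
  -- the modified-weight representation of the current
  have hstar : ∀ i, ∑ j, R' j i * v j i = ctmcAvgCurrent R w p := by
    intro i
    have hsplit : ∑ j, R' j i * v j i
        = (∑ j, w j i * R' j i) + ((∑ j, φ j * R' j i) - φ i * Γ i) := by
      have h1 : ∀ j, R' j i * v j i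
          = w j i * R' j i + (φ j * R' j i - φ i * R' j i) := by
        intro j
        simp only [hvdef]
        ring
      rw [Finset.sum_congr rfl fun j _ => h1 j, Finset.sum_add_distrib,
        Finset.sum_sub_distrib]
      have h2 : ∑ j, φ i * R' j i = φ i * Γ i := by
        rw [← Finset.mul_sum]
      rw [h2]
    rw [hsplit, hAB i]
    ring
  have hwR : ∀ i, ∑ j, w j i * R' j i
      = ctmcAvgCurrent R w p - (∑ j, φ j * R' j i) + φ i * Γ i := by
    intro i
    have := hAB i
    linarith
  -- F as a v-weighted sum
  have hFv : ∑ i, ∑ j, R' j i * p i * v j i = ctmcAvgCurrent R w p := by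
    have h1 : ∀ i, ∑ j, R' j i * p i * v j i = p i * ctmcAvgCurrent R w p := by
      intro i
      rw [← hstar i, Finset.mul_sum]
      exact Finset.sum_congr rfl fun j _ => by ring
    rw [Finset.sum_congr rfl fun i _ => h1 i, ← Finset.sum_mul, hp1, one_mul]
  -- D as a v²-weighted sum
  have hDv : ∑ i, ∑ j, R' j i * p i * v j i ^ 2 = ctmcNoise R w p := by
    have hper : ∀ i, ∑ j, R' j i * p i * v j i ^ 2
        = p i * (∑ j, w j i ^ 2 * R' j i)
          + 2 * (p i * (∑ j, φ j * (w j i * R' j i)))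
          + p i * (∑ j, φ j ^ 2 * R' j i)
          - 2 * φ i * p i * (∑ j, w j i * R' j i)
          - 2 * (φ i * p i * (∑ j, φ j * R' j i))
          + φ i ^ 2 * p i * Γ i := by
      intro i
      have e1 : p i * (∑ j, w j i ^ 2 * R' j i)
          = ∑ j, p i * (w j i ^ 2 * R' j i) := Finset.mul_sum _ _ _
      have e2 : 2 * (p i * (∑ j, φ j * (w j i * R' j i)))
          = ∑ j, 2 * (p i * (φ j * (w j i * R' j i))) := by
        rw [Finset.mul_sum, Finset.mul_sum]
      have e3 : p i * (∑ j, φ j ^ 2 * R' j i)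
          = ∑ j, p i * (φ j ^ 2 * R' j i) := Finset.mul_sum _ _ _
      have e4 : 2 * φ i * p i * (∑ j, w j i * R' j i)
          = ∑ j, 2 * φ i * p i * (w j i * R' j i) := Finset.mul_sum _ _ _
      have e5 : 2 * (φ i * p i * (∑ j, φ j * R' j i))
          = ∑ j, 2 * (φ i * p i * (φ j * R' j i)) := by
        rw [Finset.mul_sum, Finset.mul_sum]
      have e6 : φ i ^ 2 * p i * Γ i = ∑ j, φ i ^ 2 * p i * R' j i := by
        simp only [hΓdef]
        rw [Finset.mul_sum]
      rw [e1, e2, e3, e4, e5, e6, ← Finset.sum_add_distrib, ← Finset.sum_add_distrib,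
        ← Finset.sum_sub_distrib, ← Finset.sum_sub_distrib, ← Finset.sum_add_distrib]
      refine Finset.sum_congr rfl fun j _ => ?_
      simp only [hvdef]
      ring
    have hper2 : ∀ i, ∑ j, R' j i * p i * v j i ^ 2
        = p i * (∑ j, w j i ^ 2 * R' j i)
          + 2 * (p i * (∑ j, φ j * (w j i * R' j i)))
          + p i * (∑ j, φ j ^ 2 * R' j i)
          - 2 * ctmcAvgCurrent R w p * (φ i * p i)
          - φ i ^ 2 * p i * Γ i := by
      intro i
      rw [hper i, hwR i]
      ring
    rw [Finset.sum_congr rfl fun i _ => hper2 i]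
    simp only [Finset.sum_add_distrib, Finset.sum_sub_distrib]
    have hT3 : ∑ i, p i * (∑ j, φ j ^ 2 * R' j i) = ∑ i, φ i ^ 2 * p i * Γ i := by
      have l1 : ∀ i, p i * (∑ j, φ j ^ 2 * R' j i)
          = ∑ j, φ j ^ 2 * (R' j i * p i) := by
        intro i
        rw [Finset.mul_sum]
        exact Finset.sum_congr rfl fun j _ => by ring
      rw [Finset.sum_congr rfl fun i _ => l1 i, Finset.sum_comm]
      refine Finset.sum_congr rfl fun j _ => ?_
      rw [← Finset.mul_sum, hstat j]
      ring
    have hT4 : ∑ i, 2 * ctmcAvgCurrent R w p * (φ i * p i) = 0 := by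
      rw [← Finset.mul_sum]
      have : ∑ i, φ i * p i = 0 := hφp
      rw [this, mul_zero]
    rw [hT3, hT4]
    have hD1 : (fun _ => (1:ℝ)) ⬝ᵥ (ctmcCurrentMatrix R (fun j i => w j i ^ 2) *ᵥ p)
        = ∑ i, p i * (∑ j, w j i ^ 2 * R' j i) := by
      simp only [Matrix.mulVec, dotProduct, one_mul]
      rw [Finset.sum_comm]
      refine Finset.sum_congr rfl fun i _ => ?_
      rw [Finset.mul_sum]
      exact Finset.sum_congr rfl fun j _ => by rw [hC2 j i]; ring
    have hD2 : (fun _ => (1:ℝ)) ⬝ᵥ (ctmcCurrentMatrix R w *ᵥ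
          (ctmcNoiseQ R p *ᵥ (ctmcCurrentMatrix R w *ᵥ p)))
        = ∑ i, p i * (∑ j, φ j * (w j i * R' j i)) := by
      have htarget : ∑ i, p i * (∑ j, φ j * (w j i * R' j i))
          = ∑ k, ∑ l, ctmcCurrentMatrix R w k l
              * (∑ j, ctmcNoiseQ R p l j * (∑ i, ctmcCurrentMatrix R w j i * p i)) := by
        calc ∑ i, p i * (∑ j, φ j * (w j i * R' j i))
            = ∑ i, ∑ j, φ j * (ctmcCurrentMatrix R w j i * p i) := by
              refine Finset.sum_congr rfl fun i _ => ?_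
              rw [Finset.mul_sum]
              exact Finset.sum_congr rfl fun j _ => by rw [hC j i]; ring
          _ = ∑ j, ∑ i, φ j * (ctmcCurrentMatrix R w j i * p i) := Finset.sum_comm
          _ = ∑ j, ∑ k, ∑ l, ctmcCurrentMatrix R w k l
                * (ctmcNoiseQ R p l j * (∑ i, ctmcCurrentMatrix R w j i * p i)) := by
              refine Finset.sum_congr rfl fun j _ => ?_
              rw [← Finset.mul_sum]
              simp only [hφdef]
              rw [Finset.sum_mul]
              exact Finset.sum_congr rfl fun k _ => by
                rw [Finset.sum_mul]
                exact Finset.sum_congr rfl fun l _ => by ring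
          _ = ∑ k, ∑ j, ∑ l, ctmcCurrentMatrix R w k l
                * (ctmcNoiseQ R p l j * (∑ i, ctmcCurrentMatrix R w j i * p i)) :=
              Finset.sum_comm
          _ = ∑ k, ∑ l, ∑ j, ctmcCurrentMatrix R w k l
                * (ctmcNoiseQ R p l j * (∑ i, ctmcCurrentMatrix R w j i * p i)) :=
              Finset.sum_congr rfl fun k _ => Finset.sum_comm
          _ = ∑ k, ∑ l, ctmcCurrentMatrix R w k l
                * (∑ j, ctmcNoiseQ R p l j * (∑ i, ctmcCurrentMatrix R w j i * p i)) :=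
              Finset.sum_congr rfl fun k _ => Finset.sum_congr rfl fun l _ =>
                (Finset.mul_sum _ _ _).symm
      rw [htarget]
      simp only [Matrix.mulVec, dotProduct, one_mul]
    have hNoise : ctmcNoise R w p
        = (fun _ => (1:ℝ)) ⬝ᵥ (ctmcCurrentMatrix R (fun j i => w j i ^ 2) *ᵥ p)
          + 2 * ((fun _ => (1:ℝ)) ⬝ᵥ (ctmcCurrentMatrix R w *ᵥ
              (ctmcNoiseQ R p *ᵥ (ctmcCurrentMatrix R w *ᵥ p)))) := rfl
    rw [hNoise, hD1, hD2]
    have h2' : ∑ i, 2 * (p i * (∑ j, φ j * (w j i * R' j i)))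
        = 2 * ∑ i, p i * (∑ j, φ j * (w j i * R' j i)) := by
      rw [Finset.mul_sum]
    rw [h2']
    ring
  -- escape rates are bounded by S
  have hΓeq : ∀ x : (Fin G → Bool) × M, Γ x = ∑ a, γ a x.2 (x.1 a) := by
    intro x
    have h1 : Γ x = ∑ k, R k x := by
      simp only [hΓdef, hR'def]
      refine Finset.sum_congr rfl fun k _ => ?_
      by_cases h : k = x
      · simp [h, hRdiag x]
      · simp [h]
    rw [h1]
    have h2 : ∀ k : (Fin G → Bool) × M, R k x = ∑ a : Fin G,
        if k = (Function.update x.1 a (!(x.1 a)), u x.2 a (x.1 a))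
        then γ a x.2 (x.1 a) else 0 := by
      intro k
      rw [hR k x]
      refine Finset.sum_congr rfl fun a _ => ?_
      refine if_congr ?_ rfl rfl
      constructor
      · rintro ⟨ha, hb⟩
        exact Prod.ext ha hb
      · rintro rfl
        exact ⟨rfl, rfl⟩
    rw [Finset.sum_congr rfl fun k _ => h2 k, Finset.sum_comm]
    refine Finset.sum_congr rfl fun a _ => ?_
    rw [Finset.sum_ite_eq' Finset.univ
      ((Function.update x.1 a (!(x.1 a)), u x.2 a (x.1 a)))
      (fun _ => γ a x.2 (x.1 a))]
    simp
  have hΓle : ∀ x : (Fin G → Bool) × M, Γ x ≤ S := by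
    intro x
    rw [hΓeq x]
    exact Finset.le_sup' (f := fun mi : M × (Fin G → Bool) => ∑ a, γ a mi.1 (mi.2 a))
      (Finset.mem_univ (x.2, x.1))
  -- total activity bound
  have hA : ∑ i, ∑ j, R' j i * p i ≤ S := by
    have h1 : ∀ i, ∑ j, R' j i * p i = Γ i * p i := by
      intro i
      rw [← Finset.sum_mul]
    rw [Finset.sum_congr rfl fun i _ => h1 i]
    calc ∑ i, Γ i * p i ≤ ∑ i, S * p i :=
          Finset.sum_le_sum fun i _ => mul_le_mul_of_nonneg_right (hΓle i) (hp0 i)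
      _ = S := by rw [← Finset.mul_sum, hp1, mul_one]
  -- Cauchy–Schwarz
  have hCS := Finset.sum_sq_le_sum_mul_sum_of_sq_eq_mul
    (s := (Finset.univ : Finset ((((Fin G → Bool) × M)) × (((Fin G → Bool) × M)))))
    (r := fun x => R' x.2 x.1 * p x.1 * v x.2 x.1)
    (f := fun x => R' x.2 x.1 * p x.1)
    (g := fun x => R' x.2 x.1 * p x.1 * v x.2 x.1 ^ 2)
    (fun x _ => mul_nonneg (hR'nn _ _) (hp0 _))
    (fun x _ => mul_nonneg (mul_nonneg (hR'nn _ _) (hp0 _)) (sq_nonneg _))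
    (fun x _ => by ring)
  have hFv' : ∑ x : (((Fin G → Bool) × M)) × (((Fin G → Bool) × M)),
      R' x.2 x.1 * p x.1 * v x.2 x.1 = ctmcAvgCurrent R w p := by
    rw [Fintype.sum_prod_type]
    exact hFv
  have hDv' : ∑ x : (((Fin G → Bool) × M)) × (((Fin G → Bool) × M)),
      R' x.2 x.1 * p x.1 * v x.2 x.1 ^ 2 = ctmcNoise R w p := by
    rw [Fintype.sum_prod_type]
    exact hDv
  have hA' : ∑ x : (((Fin G → Bool) × M)) × (((Fin G → Bool) × M)),
      R' x.2 x.1 * p x.1 ≤ S := by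
    rw [Fintype.sum_prod_type]
    exact hA
  rw [hFv', hDv'] at hCS
  rw [div_le_iff₀ hD]
  calc ctmcAvgCurrent R w p ^ 2
      ≤ (∑ x : (((Fin G → Bool) × M)) × (((Fin G → Bool) × M)),
          R' x.2 x.1 * p x.1) * ctmcNoise R w p := hCS
    _ ≤ S * ctmcNoise R w p := mul_le_mul_of_nonneg_right hA' (le_of_lt hD)
end

section
/- Fix an integer G ≥ 1, a nonempty finite set M (memory states), a nonempty set J̃ ⊆ [0,∞), and integers d_1,…,d_G ≥ 2. For each a ∈ {1,…,G} let γ^{(a)}: M → J̃^{d_a} be a parameter-update function with components γ^{(a)}_i(m) ∈ J̃ for i ∈ {0,…,d_a−1}, and let u: M × {1,…,G} × (⋃_a {0,…,d_a−1}) → M be an arbitrary memory-update function. Consider the continuous-time Markov chain on the finite state space V = ({0,…,d_1−1} × ⋯ × {0,…,d_G−1}) × M whose only nonzero jump rates are, for each a and each (c,m) ∈ V, a jump from (c,m) to (c with its a-th component replaced by c_a + 1 mod d_a, u(m,a,c_a)) at rate γ^{(a)}_{c_a}(m) (for distinct a these target states are distinct, so the rate matrix is well defined); the escape rate from (c,m)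 is Γ_{(c,m)} = Σ_{a=1}^G γ^{(a)}_{c_a}(m). Let p be any stationary distribution of this chain, let w be arbitrary real weights on the jumps, and let F, D and S = F²/D be the asymptotic average current, noise and signal-to-noise ratio (assume the improper integral defining D converges entrywise and D > 0). Then S ≤ max_{m∈M} max_{i ∈ {0,…,d_1−1}×⋯×{0,…,d_G−1}} Σ_{a=1}^G γ^{(a)}_{i_a}(m). -/
open Matrix MeasureTheory

section Helpers

variable {V : Type} [Fintype V] [DecidableEq V]

private noncomputable def entryCLM (v : V → ℝ) (j : V) : Matrix V V ℝ →L[ℝ] ℝ :=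
  LinearMap.toContinuousLinearMap
    { toFun := fun X => (X *ᵥ v) j
      map_add' := fun X Y => by simp [Matrix.add_mulVec]
      map_smul' := fun c X => by simp [Matrix.smul_mulVec] }

private lemma matExp_entry_hasDerivAt (L : Matrix V V ℝ) (v : V → ℝ) (j : V) (t : ℝ) :
    HasDerivAt (fun τ : ℝ => (NormedSpace.exp (τ • L) *ᵥ v) j)
      ((L *ᵥ (NormedSpace.exp (t • L) *ᵥ v)) j) t := by
  letI : SeminormedRing (Matrix V V ℝ) := Matrix.linftyOpSemiNormedRing
  letI : NormedRing (Matrix V V ℝ) := Matrix.linftyOpNormedRing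
  letI : NormedAlgebra ℝ (Matrix V V ℝ) := Matrix.linftyOpNormedAlgebra
  have h1 : HasDerivAt (fun u : ℝ => NormedSpace.exp (u • L))
      (L * NormedSpace.exp (t • L)) t := hasDerivAt_exp_smul_const' L t
  have h2 := ((entryCLM v j).hasFDerivAt.comp_hasDerivAt t h1)
  have h3 : entryCLM v j (L * NormedSpace.exp (t • L))
      = (L *ᵥ (NormedSpace.exp (t • L) *ᵥ v)) j := by
    show ((L * NormedSpace.exp (t • L)) *ᵥ v) j = _
    simp [Matrix.mulVec_mulVec]
  exact h2.congr_deriv h3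

private lemma matExp_entry_eq_zero_of_support (M : Matrix V V ℝ) (p : V → ℝ)
    (hM : ∀ z : V → ℝ, (∀ i, p i = 0 → z i = 0) → ∀ j, p j = 0 → (M *ᵥ z) j = 0)
    (v : V → ℝ) (hv : ∀ i, p i = 0 → v i = 0) (j : V) (hj : p j = 0) :
    (NormedSpace.exp M *ᵥ v) j = 0 := by
  letI : SeminormedRing (Matrix V V ℝ) := Matrix.linftyOpSemiNormedRing
  letI : NormedRing (Matrix V V ℝ) := Matrix.linftyOpNormedRing
  letI : NormedAlgebra ℝ (Matrix V V ℝ) := Matrix.linftyOpNormedAlgebra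
  have hz : ∀ n : ℕ, ∀ i, p i = 0 → ((M ^ n) *ᵥ v) i = 0 := by
    intro n
    induction n with
    | zero => simpa using hv
    | succ n ih =>
      intro i hi
      rw [pow_succ', ← Matrix.mulVec_mulVec]
      exact hM _ ih i hi
  have hsum : Summable (fun n : ℕ => ((Nat.factorial n : ℝ)⁻¹) • M ^ n) :=
    NormedSpace.expSeries_summable' (𝕂 := ℝ) M
  have h0 : (NormedSpace.exp M *ᵥ v) j = entryCLM v j (NormedSpace.exp M) := rfl
  rw [h0, NormedSpace.exp_eq_tsum ℝ, ContinuousLinearMap.map_tsum _ hsum]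
  have hterm : ∀ n : ℕ, entryCLM v j ((Nat.factorial n : ℝ)⁻¹ • M ^ n) = 0 := by
    intro n
    rw [_root_.map_smul]
    have : entryCLM v j (M ^ n) = ((M ^ n) *ᵥ v) j := rfl
    simp [this, hz n j hj]
  rw [tsum_congr hterm, tsum_zero]

private lemma tendsto_zero_of_integrableOn {f : ℝ → ℝ} (hf : IntegrableOn f (Set.Ioi (0:ℝ)))
    {c : ℝ} (hc : Filter.Tendsto f Filter.atTop (nhds c)) : c = 0 := by
  by_contra h
  have hpos : (0:ℝ) < |c| / 2 := by positivity
  have hev : ∀ᶠ t in Filter.atTop, |c| / 2 ≤ ‖f t‖ := by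
    filter_upwards [hc.eventually (Metric.ball_mem_nhds c hpos)] with t ht
    have h1 : |f t - c| < |c| / 2 := by
      simpa [Real.dist_eq] using ht
    have h2 : |c| - |f t| ≤ |f t - c| := by
      have := abs_sub_abs_le_abs_sub c (f t)
      simpa [abs_sub_comm] using this
    simp only [Real.norm_eq_abs]
    linarith
  obtain ⟨A, hA⟩ := Filter.eventually_atTop.mp hev
  set B := max A 0 with hB
  have hsub : Set.Ioi B ⊆ Set.Ioi (0:ℝ) := fun t ht => lt_of_le_of_lt (le_max_right A 0) ht
  have h1 : IntegrableOn f (Set.Ioi B) := hf.mono_set hsub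
  have h2 : IntegrableOn (fun _ : ℝ => |c| / 2) (Set.Ioi B) := by
    refine Integrable.mono h1 aestronglyMeasurable_const ?_
    refine (ae_restrict_iff' measurableSet_Ioi).2 (Filter.Eventually.of_forall ?_)
    intro t ht
    have := hA t (le_trans (le_max_left A 0) (le_of_lt ht))
    simpa [Real.norm_eq_abs, abs_of_nonneg (le_of_lt hpos)] using this
  rw [integrableOn_const_iff] at h2
  rcases h2 with h2 | h2
  · exact absurd h2 (enorm_ne_zero.mpr hpos.ne')
  · rw [Real.volume_Ioi] at h2
    exact (lt_irrefl _ h2).elim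

private lemma algebra_key (Roff : V → V → ℝ) (hR0 : ∀ j i, 0 ≤ Roff j i)
    (p : V → ℝ) (hp0 : ∀ i, 0 ≤ p i)
    (hstat : ∀ j, ∑ i, Roff j i * p i = (∑ k, Roff k j) * p j)
    (w : V → V → ℝ) (y : V → ℝ)
    (hsupp : ∀ i, p i = 0 → y i = 0)
    (hy1 : ∑ i, y i = 0)
    (hPoisson : ∀ j, (∑ i, Roff j i * y i) - (∑ k, Roff k j) * y j
      = p j * (∑ a, ∑ b, w a b * Roff a b * p b) - ∑ i, w j i * Roff j i * p i) :
    (∑ a, ∑ b, w a b * Roff a b * p b) ^ 2 ≤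
      (∑ i, (∑ k, Roff k i) * p i) *
        ((∑ a, ∑ b, w a b ^ 2 * Roff a b * p b) + 2 * ∑ a, ∑ b, w a b * Roff a b * y b) := by
  classical
  set Γ : V → ℝ := fun i => ∑ k, Roff k i with hΓ
  set F : ℝ := ∑ a, ∑ b, w a b * Roff a b * p b with hF
  set x : V → ℝ := fun i => if p i = 0 then 0 else y i / p i with hx
  have hxy : ∀ i, y i = p i * x i := by
    intro i
    by_cases h : p i = 0
    · simp [hx, h, hsupp i h]
    · rw [hx]; simp only [if_neg h]; rw [mul_div_cancel₀ (y i) h]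
  set q : V → V → ℝ := fun a b => Roff a b * p b with hq
  have hq0 : ∀ a b, 0 ≤ q a b := fun a b => mul_nonneg (hR0 a b) (hp0 b)
  set G : V → V → ℝ := fun a b => w a b - x a + x b with hG
  -- basic rearrangements
  have row_sum : ∀ (f : V → ℝ) (a : V), ∑ b, q a b * f a = Γ a * p a * f a := by
    intro f a
    rw [← Finset.sum_mul, ← hstat a]
  have col_sum : ∀ (f : V → ℝ) (b : V), ∑ a, q a b * f b = Γ b * p b * f b := by
    intro f b
    rw [← Finset.sum_mul]
    have : ∑ a, q a b = Γ b * p b := by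
      simp [hq, hΓ, Finset.sum_mul]
    rw [this]
  -- key1 : ∑∑ q a b * x a
  have key1 : ∑ a, ∑ b, q a b * x a = ∑ j, Γ j * p j * x j := by
    exact Finset.sum_congr rfl fun a _ => row_sum x a
  have key2 : ∑ a, ∑ b, q a b * x b = ∑ j, Γ j * p j * x j := by
    rw [Finset.sum_comm]
    exact Finset.sum_congr rfl fun b _ => col_sum x b
  -- A1 = F
  have hA1 : ∑ a, ∑ b, q a b * G a b = F := by
    have expand : ∀ a b, q a b * G a b = q a b * w a b - q a b * x a + q a b * x b := by
      intro a b; simp only [hG]; ring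
    calc ∑ a, ∑ b, q a b * G a b
        = ∑ a, ∑ b, (q a b * w a b - q a b * x a + q a b * x b) := by
          exact Finset.sum_congr rfl fun a _ => Finset.sum_congr rfl fun b _ => expand a b
      _ = (∑ a, ∑ b, q a b * w a b) - (∑ a, ∑ b, q a b * x a) + (∑ a, ∑ b, q a b * x b) := by
          simp [Finset.sum_add_distrib, Finset.sum_sub_distrib]
      _ = F := by
          rw [key1, key2, hF]
          have : ∀ a b, q a b * w a b = w a b * Roff a b * p b := by intro a b; simp [hq]; ring
          rw [Finset.sum_congr rfl fun a _ => Finset.sum_congr rfl fun b _ => this a b]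
          ring
  -- named pieces
  set U : ℝ := ∑ a, ∑ b, q a b * (x a * x b) with hU
  set W2 : ℝ := ∑ j, Γ j * p j * x j ^ 2 with hW2
  set TC : ℝ := ∑ a, ∑ b, w a b * Roff a b * y b with hTC
  set Sw2 : ℝ := ∑ a, ∑ b, w a b ^ 2 * Roff a b * p b with hSw2
  -- T2 : ∑∑ q w x_b = TC
  have hT2 : ∑ a, ∑ b, q a b * w a b * x b = TC := by
    rw [hTC]
    refine Finset.sum_congr rfl fun a _ => Finset.sum_congr rfl fun b _ => ?_
    rw [hxy b]; simp [hq]; ring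
  -- T1 : ∑∑ q w x_a = -U + W2
  have hT1 : ∑ a, ∑ b, q a b * w a b * x a = -U + W2 := by
    have step1 : ∀ a, ∑ b, q a b * w a b * x a = x a * ∑ b, w a b * Roff a b * p b := by
      intro a
      rw [Finset.mul_sum]
      refine Finset.sum_congr rfl fun b _ => ?_
      simp [hq]; ring
    rw [Finset.sum_congr rfl fun a _ => step1 a]
    have step2 : ∀ a, x a * (∑ b, w a b * Roff a b * p b)
        = x a * p a * F - x a * ((∑ i, Roff a i * y i) - Γ a * y a) := by
      intro a
      have := hPoisson a
      have h2 : (∑ i, w a i * Roff a i * p i) = p a * F - ((∑ i, Roff a i * y i) - Γ a * y a) := by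
        rw [hF] at this ⊢
        linarith [this]
      rw [h2]; ring
    rw [Finset.sum_congr rfl fun a _ => step2 a]
    rw [Finset.sum_sub_distrib]
    have e1 : ∑ a, x a * p a * F = 0 := by
      have : ∀ a, x a * p a * F = y a * F := by intro a; rw [hxy a]; ring
      rw [Finset.sum_congr rfl fun a _ => this a, ← Finset.sum_mul, hy1, zero_mul]
    have e2 : ∑ a, x a * ((∑ i, Roff a i * y i) - Γ a * y a) = U - W2 := by
      have : ∀ a, x a * ((∑ i, Roff a i * y i) - Γ a * y a)
          = (∑ i, q a i * (x a * x i)) - Γ a * p a * x a ^ 2 := by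
        intro a
        rw [mul_sub, Finset.mul_sum]
        have h3 : ∀ i, x a * (Roff a i * y i) = q a i * (x a * x i) := by
          intro i; rw [hxy i]; simp only [hq]; ring
        rw [Finset.sum_congr rfl fun i _ => h3 i]
        have h4 : x a * (Γ a * y a) = Γ a * p a * x a ^ 2 := by rw [hxy a]; ring
        rw [h4]
      rw [Finset.sum_congr rfl fun a _ => this a, Finset.sum_sub_distrib, hU, hW2]
    rw [e1, e2]; ring
  -- quadratic pieces
  have hQa : ∑ a, ∑ b, q a b * x a ^ 2 = W2 := by
    rw [hW2]; exact Finset.sum_congr rfl fun a _ => row_sum (fun i => x i ^ 2) a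
  have hQb : ∑ a, ∑ b, q a b * x b ^ 2 = W2 := by
    rw [hW2, Finset.sum_comm]
    exact Finset.sum_congr rfl fun b _ => col_sum (fun i => x i ^ 2) b
  -- A2 = Sw2 + 2 TC
  have hA2 : ∑ a, ∑ b, q a b * G a b ^ 2 = Sw2 + 2 * TC := by
    have expand : ∀ a b, q a b * G a b ^ 2 =
        q a b * w a b ^ 2 - 2 * (q a b * w a b * x a) + 2 * (q a b * w a b * x b)
          + q a b * x a ^ 2 - 2 * (q a b * (x a * x b)) + q a b * x b ^ 2 := by
      intro a b; simp only [hG]; ring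
    calc ∑ a, ∑ b, q a b * G a b ^ 2
        = ∑ a, ∑ b, (q a b * w a b ^ 2 - 2 * (q a b * w a b * x a) + 2 * (q a b * w a b * x b)
          + q a b * x a ^ 2 - 2 * (q a b * (x a * x b)) + q a b * x b ^ 2) :=
          Finset.sum_congr rfl fun a _ => Finset.sum_congr rfl fun b _ => expand a b
      _ = (∑ a, ∑ b, q a b * w a b ^ 2) - 2 * (∑ a, ∑ b, q a b * w a b * x a)
          + 2 * (∑ a, ∑ b, q a b * w a b * x b) + (∑ a, ∑ b, q a b * x a ^ 2)
          - 2 * U + (∑ a, ∑ b, q a b * x b ^ 2) := by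
          simp only [Finset.sum_add_distrib, Finset.sum_sub_distrib, Finset.mul_sum, hU]
      _ = Sw2 + 2 * TC := by
          rw [hT1, hT2, hQa, hQb]
          have : ∑ a, ∑ b, q a b * w a b ^ 2 = Sw2 := by
            rw [hSw2]
            refine Finset.sum_congr rfl fun a _ => Finset.sum_congr rfl fun b _ => ?_
            simp [hq]; ring
          rw [this]; ring
  -- Cauchy-Schwarz
  have hA0 : ∑ a, ∑ b, q a b = ∑ i, (∑ k, Roff k i) * p i := by
    rw [Finset.sum_comm]
    exact Finset.sum_congr rfl fun b _ => by rw [← Finset.sum_mul]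
  have CS : (∑ a, ∑ b, q a b * G a b) ^ 2 ≤
      (∑ a, ∑ b, q a b) * (∑ a, ∑ b, q a b * G a b ^ 2) := by
    have h := Finset.sum_mul_sq_le_sq_mul_sq (Finset.univ : Finset (V × V))
      (fun z => Real.sqrt (q z.1 z.2)) (fun z => Real.sqrt (q z.1 z.2) * G z.1 z.2)
    have e1 : ∀ z : V × V, Real.sqrt (q z.1 z.2) * (Real.sqrt (q z.1 z.2) * G z.1 z.2)
        = q z.1 z.2 * G z.1 z.2 := by
      intro z; rw [← mul_assoc, Real.mul_self_sqrt (hq0 z.1 z.2)]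
    have e2 : ∀ z : V × V, Real.sqrt (q z.1 z.2) ^ 2 = q z.1 z.2 := by
      intro z; exact Real.sq_sqrt (hq0 z.1 z.2)
    have e3 : ∀ z : V × V, (Real.sqrt (q z.1 z.2) * G z.1 z.2) ^ 2
        = q z.1 z.2 * G z.1 z.2 ^ 2 := by
      intro z; rw [mul_pow, e2 z]
    rw [Finset.sum_congr rfl fun z _ => e1 z, Finset.sum_congr rfl fun z _ => e2 z,
      Finset.sum_congr rfl fun z _ => e3 z] at h
    simpa [Fintype.sum_prod_type] using h
  rw [← hA1, ← hA2, ← hA0]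
  exact CS

end Helpers

section Key

variable {V : Type} [Fintype V] [DecidableEq V]

private theorem snr_key (R : V → V → ℝ) (hR0 : ∀ j i, 0 ≤ R j i)
    (p : V → ℝ) (hp0 : ∀ x, 0 ≤ p x) (hp1 : ∑ x, p x = 1)
    (hpstat : ctmcRateMatrix R *ᵥ p = 0)
    (w : V → V → ℝ) (hconv : ctmcNoiseConv R p) :
    ctmcAvgCurrent R w p ^ 2 ≤
      (∑ i, (∑ k, if k = i then (0:ℝ) else R k i) * p i) * ctmcNoise R w p := by
  classical
  set Roff : V → V → ℝ := fun j i => if j = i then 0 else R j i with hRoff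
  have hRoff0 : ∀ j i, 0 ≤ Roff j i := by
    intro j i; by_cases h : j = i <;> simp [hRoff, h, hR0 j i]
  set Γ : V → ℝ := fun i => ∑ k, Roff k i with hΓ
  set L : Matrix V V ℝ := ctmcRateMatrix R with hLdef
  have hLentry : ∀ j i, L j i = Roff j i + (if j = i then -(Γ i) else 0) := by
    intro j i
    by_cases h : j = i <;> simp [hLdef, ctmcRateMatrix, hRoff, hΓ, h]
  have hLz : ∀ (z : V → ℝ) (j : V), (L *ᵥ z) j = (∑ i, Roff j i * z i) - Γ j * z j := by
    intro z j
    have hterm : ∀ i, L j i * z i = Roff j i * z i + (if j = i then -(Γ i * z i) else 0) := by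
      intro i
      rw [hLentry j i]
      by_cases h : j = i <;> simp [h] <;> ring
    calc (L *ᵥ z) j = ∑ i, L j i * z i := rfl
      _ = ∑ i, (Roff j i * z i + (if j = i then -(Γ i * z i) else 0)) :=
          Finset.sum_congr rfl fun i _ => hterm i
      _ = (∑ i, Roff j i * z i) + ∑ i, (if j = i then -(Γ i * z i) else 0) :=
          Finset.sum_add_distrib
      _ = (∑ i, Roff j i * z i) - Γ j * z j := by
          rw [Finset.sum_ite_eq]
          simp only [Finset.mem_univ, if_true]
          ring
  have hstat : ∀ j, ∑ i, Roff j i * p i = Γ j * p j := by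
    intro j
    have h0 : (L *ᵥ p) j = 0 := by rw [hpstat]; rfl
    rw [hLz p j] at h0
    linarith
  have hflow : ∀ j, p j = 0 → ∀ i, Roff j i * p i = 0 := by
    intro j hj i
    have h0 : ∑ i, Roff j i * p i = 0 := by rw [hstat j, hj, mul_zero]
    have := (Finset.sum_eq_zero_iff_of_nonneg
      (fun i _ => mul_nonneg (hRoff0 j i) (hp0 i))).1 h0
    exact this i (Finset.mem_univ i)
  -- the current matrix and current vector
  set C : Matrix V V ℝ := ctmcCurrentMatrix R w with hCdef
  have hCentry : ∀ j i, C j i = w j i * Roff j i := by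
    intro j i; by_cases h : j = i <;> simp [hCdef, ctmcCurrentMatrix, hRoff, h]
  set v : V → ℝ := fun j => ∑ i, w j i * Roff j i * p i with hv
  have hCv : C *ᵥ p = v := by
    funext j
    show ∑ i, C j i * p i = v j
    exact Finset.sum_congr rfl fun i _ => by rw [hCentry j i]
  set F : ℝ := ctmcAvgCurrent R w p with hFdef
  have hvF : ∑ j, v j = F := by
    rw [hFdef, ctmcAvgCurrent, ← hCdef, hCv]
    simp [dotProduct]
  have hv0 : ∀ j, p j = 0 → v j = 0 := by
    intro j hj
    rw [hv]
    refine Finset.sum_eq_zero fun i _ => ?_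
    rw [mul_assoc, hflow j hj i, mul_zero]
  -- the deviation function
  set h : ℝ → V → ℝ := fun τ j => (ctmcNoiseIntegrand R p τ *ᵥ v) j with hh
  have hh_eq : ∀ τ j, h τ j = (NormedSpace.exp (τ • L) *ᵥ v) j - p j * F := by
    intro τ j
    rw [hh]
    show ((NormedSpace.exp (τ • L) - Matrix.vecMulVec p fun _ => 1) *ᵥ v) j = _
    rw [Matrix.sub_mulVec]
    have : (Matrix.vecMulVec p (fun _ => 1) *ᵥ v) j = p j * F := by
      show ∑ i, Matrix.vecMulVec p (fun _ => (1:ℝ)) j i * v i = p j * F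
      simp only [Matrix.vecMulVec_apply, mul_one]
      rw [← Finset.mul_sum, hvF]
    simp [this]
  have hhint : ∀ j, IntegrableOn (fun τ => h τ j) (Set.Ioi (0:ℝ)) := by
    intro j
    have : (fun τ => h τ j) = fun τ => ∑ i, ctmcNoiseIntegrand R p τ j i * v i := rfl
    rw [this]
    exact integrable_finset_sum _ fun i _ => (hconv j i).mul_const (v i)
  have hhderiv : ∀ j τ, HasDerivAt (fun σ => h σ j) (∑ m, L j m * h τ m) τ := by
    intro j τ
    have hd := (matExp_entry_hasDerivAt L v j τ).sub_const (p j * F)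
    have hfun : (fun σ => (NormedSpace.exp (σ • L) *ᵥ v) j - p j * F) = fun σ => h σ j := by
      funext σ; rw [hh_eq σ j]
    rw [hfun] at hd
    have hder : (L *ᵥ (NormedSpace.exp (τ • L) *ᵥ v)) j = ∑ m, L j m * h τ m := by
      have e1 : (L *ᵥ (NormedSpace.exp (τ • L) *ᵥ v)) j
          = ∑ m, L j m * ((NormedSpace.exp (τ • L) *ᵥ v) m) := rfl
      rw [e1]
      have e2 : ∀ m, L j m * ((NormedSpace.exp (τ • L) *ᵥ v) m)
          = L j m * h τ m + L j m * p m * F := by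
        intro m
        rw [hh_eq τ m]; ring
      rw [Finset.sum_congr rfl fun m _ => e2 m, Finset.sum_add_distrib]
      have e3 : ∑ m, L j m * p m * F = 0 := by
        rw [← Finset.sum_mul]
        have : ∑ m, L j m * p m = (L *ᵥ p) j := rfl
        rw [this, hpstat]
        simp
      rw [e3, add_zero]
    rw [hder] at hd
    exact hd
  have hg'int : ∀ j, IntegrableOn (fun τ => ∑ m, L j m * h τ m) (Set.Ioi (0:ℝ)) := by
    intro j
    exact integrable_finset_sum _ fun m _ => (hhint m).const_mul (L j m)
  -- column sums of L vanish
  have hcol : ∀ m, ∑ j, L j m = 0 := by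
    intro m
    have : ∀ j, L j m = Roff j m + (if j = m then -(Γ m) else 0) := fun j => hLentry j m
    rw [Finset.sum_congr rfl fun j _ => this j, Finset.sum_add_distrib]
    rw [Finset.sum_ite_eq' Finset.univ m (fun _ => -(Γ m))]
    simp [hΓ]
  -- the row-sum of h vanishes identically
  have hs0 : ∀ τ, ∑ j, h τ j = 0 := by
    have hsd : ∀ τ, HasDerivAt (fun σ => ∑ j, h σ j) 0 τ := by
      intro τ
      have := HasDerivAt.sum (fun j (_ : j ∈ (Finset.univ : Finset V)) => hhderiv j τ)
      have e0 : ∑ j, ∑ m, L j m * h τ m = 0 := by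
        rw [Finset.sum_comm]
        have : ∀ m, ∑ j, L j m * h τ m = 0 := by
          intro m
          rw [← Finset.sum_mul, hcol m, zero_mul]
        rw [Finset.sum_congr rfl fun m _ => this m]
        simp
      rw [e0] at this
      have e : (∑ i, fun σ => h σ i) = fun σ => ∑ j, h σ j := by
        funext σ; rw [Finset.sum_apply]
      rw [e] at this
      exact this
    have hconst : ∀ τ, (∑ j, h τ j) = ∑ j, h 0 j := by
      intro τ
      exact is_const_of_deriv_eq_zero (fun σ => (hsd σ).differentiableAt)
        (fun σ => (hsd σ).deriv) τ 0
    have hzero : ∑ j, h 0 j = 0 := by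
      have e1 : ∀ j, h 0 j = v j - p j * F := by
        intro j
        rw [hh_eq 0 j]
        congr 1
        rw [zero_smul, NormedSpace.exp_zero, Matrix.one_mulVec]
      rw [Finset.sum_congr rfl fun j _ => e1 j, Finset.sum_sub_distrib, ← Finset.sum_mul,
        hvF, hp1]
      ring
    intro τ; rw [hconst τ, hzero]
  -- the solution of the Poisson equation
  set y : V → ℝ := ctmcNoiseQ R p *ᵥ v with hy
  have hy_int : ∀ j, y j = ∫ τ in Set.Ioi (0:ℝ), h τ j := by
    intro j
    have e1 : y j = ∑ i, (∫ τ in Set.Ioi (0:ℝ), ctmcNoiseIntegrand R p τ j i) * v i := rfl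
    rw [e1]
    have e2 : ∀ i, (∫ τ in Set.Ioi (0:ℝ), ctmcNoiseIntegrand R p τ j i) * v i
        = ∫ τ in Set.Ioi (0:ℝ), ctmcNoiseIntegrand R p τ j i * v i := by
      intro i
      rw [← integral_mul_const]
    rw [Finset.sum_congr rfl fun i _ => e2 i,
      ← integral_finset_sum _ fun i _ => (hconv j i).mul_const (v i)]
    rfl
  -- limits at infinity
  have hFTClim : ∀ j, (∫ τ in Set.Ioi (0:ℝ), ∑ m, L j m * h τ m) = -(h 0 j) := by
    intro j
    have hFTC : ∀ T : ℝ, 0 ≤ T → ∫ τ in (0:ℝ)..T, (∑ m, L j m * h τ m) = h T j - h 0 j := by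
      intro T hT
      refine intervalIntegral.integral_eq_sub_of_hasDerivAt
        (fun τ _ => hhderiv j τ) ?_
      rw [intervalIntegrable_iff]
      exact (hg'int j).mono_set (by rw [Set.uIoc_of_le hT]; exact Set.Ioc_subset_Ioi_self)
    have h1 : Filter.Tendsto (fun T => ∫ τ in (0:ℝ)..T, (∑ m, L j m * h τ m))
        Filter.atTop (nhds (∫ τ in Set.Ioi (0:ℝ), ∑ m, L j m * h τ m)) :=
      intervalIntegral_tendsto_integral_Ioi 0 (hg'int j) Filter.tendsto_id
    have h2 : Filter.Tendsto (fun T => h T j - h 0 j) Filter.atTop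
        (nhds (∫ τ in Set.Ioi (0:ℝ), ∑ m, L j m * h τ m)) := by
      refine h1.congr' ?_
      filter_upwards [Filter.eventually_ge_atTop (0:ℝ)] with T hT
      exact hFTC T hT
    have h3 : Filter.Tendsto (fun T => h T j) Filter.atTop
        (nhds ((∫ τ in Set.Ioi (0:ℝ), ∑ m, L j m * h τ m) + h 0 j)) := by
      have := h2.add_const (h 0 j)
      simpa using this
    have h4 := tendsto_zero_of_integrableOn (hhint j) h3
    linarith
  have hh00 : ∀ j, h 0 j = v j - p j * F := by
    intro j
    rw [hh_eq 0 j]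
    congr 1
    rw [zero_smul, NormedSpace.exp_zero, Matrix.one_mulVec]
  -- Poisson equation
  have hPoisson : ∀ j, (∑ i, Roff j i * y i) - Γ j * y j = p j * F - v j := by
    intro j
    have e1 : (∑ i, Roff j i * y i) - Γ j * y j = (L *ᵥ y) j := (hLz y j).symm
    have e2 : (L *ᵥ y) j = ∑ m, L j m * y m := rfl
    have e3 : ∀ m, L j m * y m = ∫ τ in Set.Ioi (0:ℝ), L j m * h τ m := by
      intro m
      rw [hy_int m, ← integral_const_mul]
    have e4 : ∑ m, (∫ τ in Set.Ioi (0:ℝ), L j m * h τ m)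
        = ∫ τ in Set.Ioi (0:ℝ), ∑ m, L j m * h τ m := by
      rw [← integral_finset_sum _ fun m _ => (hhint m).const_mul (L j m)]
    rw [e1, e2, Finset.sum_congr rfl fun m _ => e3 m, e4, hFTClim j, hh00 j]
    ring
  have hy1 : ∑ j, y j = 0 := by
    rw [Finset.sum_congr rfl fun j (_ : j ∈ Finset.univ) => hy_int j,
      ← integral_finset_sum _ fun j _ => hhint j]
    have e5 : (∫ τ in Set.Ioi (0:ℝ), ∑ j, h τ j) = ∫ τ in Set.Ioi (0:ℝ), (0:ℝ) :=
      integral_congr_ae (Filter.Eventually.of_forall fun τ => hs0 τ)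
    rw [e5]
    simp
  -- support of y
  have hysupp : ∀ j, p j = 0 → y j = 0 := by
    intro j hj
    rw [hy_int j]
    have hzero : ∀ τ : ℝ, h τ j = 0 := by
      intro τ
      rw [hh_eq τ j, hj, zero_mul, sub_zero]
      refine matExp_entry_eq_zero_of_support (τ • L) p ?_ v hv0 j hj
      intro z hz j' hj'
      have : ((τ • L) *ᵥ z) j' = τ * ((L *ᵥ z) j') := by
        rw [Matrix.smul_mulVec]; rfl
      rw [this, hLz z j', hz j' hj']
      have : ∑ i, Roff j' i * z i = 0 := by
        refine Finset.sum_eq_zero fun i _ => ?_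
        by_cases hpi : p i = 0
        · rw [hz i hpi, mul_zero]
        · have h5 := hflow j' hj' i
          have h6 : Roff j' i = 0 := by
            rcases mul_eq_zero.mp h5 with h | h
            · exact h
            · exact absurd h hpi
          rw [h6, zero_mul]
      rw [this]
      ring
    have e5 : (∫ τ in Set.Ioi (0:ℝ), h τ j) = ∫ τ in Set.Ioi (0:ℝ), (0:ℝ) :=
      integral_congr_ae (Filter.Eventually.of_forall fun τ => hzero τ)
    rw [e5]
    simp
  -- assemble
  have hFsum : F = ∑ a, ∑ b, w a b * Roff a b * p b := by
    rw [← hvF]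
  have hNoise : ctmcNoise R w p
      = (∑ a, ∑ b, w a b ^ 2 * Roff a b * p b) + 2 * ∑ a, ∑ b, w a b * Roff a b * y b := by
    rw [ctmcNoise]
    congr 1
    · show ∑ j, (1:ℝ) * (ctmcCurrentMatrix R (fun j i => w j i ^ 2) *ᵥ p) j = _
      have hC2entry : ∀ j i, ctmcCurrentMatrix R (fun j i => w j i ^ 2) j i
          = w j i ^ 2 * Roff j i := by
        intro j i; by_cases h : j = i <;> simp [ctmcCurrentMatrix, hRoff, h]
      refine Finset.sum_congr rfl fun a _ => ?_
      rw [one_mul]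
      show ∑ b, ctmcCurrentMatrix R (fun j i => w j i ^ 2) a b * p b = _
      refine Finset.sum_congr rfl fun b _ => ?_
      rw [hC2entry a b]
    · congr 1
      show ∑ j, (1:ℝ) * (C *ᵥ (ctmcNoiseQ R p *ᵥ (C *ᵥ p))) j = _
      rw [hCv]
      refine Finset.sum_congr rfl fun a _ => ?_
      rw [one_mul]
      show ∑ b, C a b * y b = _
      refine Finset.sum_congr rfl fun b _ => ?_
      rw [hCentry a b]
  have hPoisson' : ∀ j, (∑ i, Roff j i * y i) - (∑ k, Roff k j) * y j
      = p j * (∑ a, ∑ b, w a b * Roff a b * p b) - ∑ i, w j i * Roff j i * p i := by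
    intro j
    have := hPoisson j
    rw [hFsum] at this
    exact this
  have key := algebra_key Roff hRoff0 p hp0
    (fun j => by rw [hstat j]) w y hysupp hy1 hPoisson'
  rw [← hFsum] at key
  have hKeq : (∑ i, (∑ k, if k = i then (0:ℝ) else R k i) * p i)
      = ∑ i, (∑ k, Roff k i) * p i := rfl
  rw [hKeq, hNoise]
  exact key

end Key

section MainGlue

private theorem snr_main {G : ℕ}
    {M : Type} [Fintype M] [DecidableEq M] [Nonempty M]
    (Jt : Set ℝ) (hJtsub : Jt ⊆ Set.Ici 0)
    (d : Fin G → ℕ) (hd : ∀ a, 2 ≤ d a) [∀ a, NeZero (d a)]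
    (γ : (a : Fin G) → M → Fin (d a) → ℝ) (hγ : ∀ a m i, γ a m i ∈ Jt)
    (u : M → (a : Fin G) → Fin (d a) → M)
    (R : (((a : Fin G) → Fin (d a)) × M) → (((a : Fin G) → Fin (d a)) × M) → ℝ)
    (hR : ∀ x' x : ((a : Fin G) → Fin (d a)) × M, R x' x =
      ∑ a : Fin G,
        if x'.1 = Function.update x.1 a (x.1 a + 1) ∧ x'.2 = u x.2 a (x.1 a)
        then γ a x.2 (x.1 a) else 0)
    (p : (((a : Fin G) → Fin (d a)) × M) → ℝ)
    (hp0 : ∀ x, 0 ≤ p x) (hp1 : ∑ x, p x = 1)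
    (hpstat : ctmcRateMatrix R *ᵥ p = 0)
    (w : (((a : Fin G) → Fin (d a)) × M) → (((a : Fin G) → Fin (d a)) × M) → ℝ)
    (hconv : ctmcNoiseConv R p)
    (hD : 0 < ctmcNoise R w p) :
    ctmcAvgCurrent R w p ^ 2 / ctmcNoise R w p ≤
      Finset.univ.sup' Finset.univ_nonempty
        (fun mi : M × ((a : Fin G) → Fin (d a)) => ∑ a, γ a mi.1 (mi.2 a)) := by
  classical
  have hγ0 : ∀ a m i, 0 ≤ γ a m i := fun a m i => hJtsub (hγ a m i)
  have hR0 : ∀ j i, 0 ≤ R j i := by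
    intro j i
    rw [hR j i]
    refine Finset.sum_nonneg fun a _ => ?_
    by_cases hc : (j.1 = Function.update i.1 a (i.1 a + 1) ∧ j.2 = u i.2 a (i.1 a))
    · rw [if_pos hc]; exact hγ0 a i.2 (i.1 a)
    · rw [if_neg hc]
  have hne : ∀ (x : ((a : Fin G) → Fin (d a)) × M) (a : Fin G),
      ((Function.update x.1 a (x.1 a + 1), u x.2 a (x.1 a)) :
        ((a : Fin G) → Fin (d a)) × M) ≠ x := by
    intro x a hx
    have h1 : Function.update x.1 a (x.1 a + 1) = x.1 := congrArg Prod.fst hx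
    have h2 : x.1 a + 1 = x.1 a := by
      conv_rhs => rw [← h1, Function.update_self]
    have h3 : (1 : Fin (d a)) = 0 := by
      have h4 : x.1 a + 1 = x.1 a + 0 := by rw [add_zero]; exact h2
      exact add_left_cancel h4
    rw [Fin.one_eq_zero_iff] at h3
    have := hd a
    omega
  have hΓeq : ∀ x : ((a : Fin G) → Fin (d a)) × M,
      (∑ k, if k = x then (0:ℝ) else R k x) = ∑ a, γ a x.2 (x.1 a) := by
    intro x
    have hRcol : ∀ k, (if k = x then (0:ℝ) else R k x)
        = ∑ a, (if k = ((Function.update x.1 a (x.1 a + 1), u x.2 a (x.1 a)) :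
            ((a : Fin G) → Fin (d a)) × M) then γ a x.2 (x.1 a) else 0) := by
      intro k
      by_cases hk : k = x
      · rw [if_pos hk]
        symm
        refine Finset.sum_eq_zero fun a _ => ?_
        rw [if_neg]
        rw [hk]
        exact fun hc => hne x a hc.symm
      · rw [if_neg hk, hR k x]
        refine Finset.sum_congr rfl fun a _ => ?_
        congr 1
        rw [Prod.ext_iff]
    rw [Finset.sum_congr rfl fun k _ => hRcol k, Finset.sum_comm]
    refine Finset.sum_congr rfl fun a _ => ?_
    rw [Finset.sum_ite_eq' Finset.univ
      ((Function.update x.1 a (x.1 a + 1), u x.2 a (x.1 a)) :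
        ((a : Fin G) → Fin (d a)) × M) (fun _ => γ a x.2 (x.1 a))]
    simp
  have key := snr_key R hR0 p hp0 hp1 hpstat w hconv
  set S : ℝ := Finset.univ.sup' Finset.univ_nonempty
    (fun mi : M × ((a : Fin G) → Fin (d a)) => ∑ a, γ a mi.1 (mi.2 a)) with hS
  have hKle : (∑ i, (∑ k, if k = i then (0:ℝ) else R k i) * p i) ≤ S := by
    have e1 : ∀ i : ((a : Fin G) → Fin (d a)) × M,
        (∑ k, if k = i then (0:ℝ) else R k i) * p i ≤ S * p i := by
      intro i
      rw [hΓeq i]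
      refine mul_le_mul_of_nonneg_right ?_ (hp0 i)
      have := Finset.le_sup' (f := fun mi : M × ((a : Fin G) → Fin (d a)) =>
        ∑ a, γ a mi.1 (mi.2 a)) (Finset.mem_univ (i.2, i.1))
      exact this
    calc (∑ i, (∑ k, if k = i then (0:ℝ) else R k i) * p i)
        ≤ ∑ i, S * p i := Finset.sum_le_sum fun i _ => e1 i
      _ = S := by rw [← Finset.mul_sum, hp1, mul_one]
  rw [div_le_iff₀ hD]
  calc ctmcAvgCurrent R w p ^ 2
      ≤ (∑ i, (∑ k, if k = i then (0:ℝ) else R k i) * p i) * ctmcNoise R w p := key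
    _ ≤ S * ctmcNoise R w p := mul_le_mul_of_nonneg_right hKle (le_of_lt hD)

end MainGlue

/-- **Classical no-go bound for clockworks of arbitrary dimensions.**
For `G ≥ 1` classical clockworks of dimensions `d₁,…,d_G ≥ 2` controlled by a feedback policy
with finite nonempty memory `M`, allowed rates in a nonempty set `J̃ ⊆ [0,∞)`, parameter-update
functions `γ⁽ᵃ⁾ : M → J̃^{dₐ}` and an arbitrary memory-update function `u`, consider the
continuous-time Markov chain on `({0,…,d₁−1} × ⋯ × {0,…,d_G−1}) × M` whose only jumps replace
the `a`-th component `cₐ` by `cₐ + 1 (mod dₐ)` and update the memory to `u(m,a,cₐ)`, at rate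
`γ⁽ᵃ⁾_{cₐ}(m)`. For any stationary distribution `p`, any real weights `w` on the jumps and the
resulting asymptotic average current `F`, noise `D > 0` (with the noise integral convergent
entrywise) and signal-to-noise ratio `S = F²/D`, one has
`S ≤ max_{m∈M} max_{i} Σₐ γ⁽ᵃ⁾_{iₐ}(m)`. -/
theorem classical_snr_bound_general_dim
    (G : ℕ) (hG : 1 ≤ G)
    (M : Type) [Fintype M] [DecidableEq M] [Nonempty M]
    (Jt : Set ℝ) (hJtne : Jt.Nonempty) (hJtsub : Jt ⊆ Set.Ici 0)
    (d : Fin G → ℕ) (hd : ∀ a, 2 ≤ d a) [∀ a, NeZero (d a)]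
    (γ : (a : Fin G) → M → Fin (d a) → ℝ) (hγ : ∀ a m i, γ a m i ∈ Jt)
    (u : M → (a : Fin G) → Fin (d a) → M)
    -- the jump rates of the chain on `(Π a, Fin (d a)) × M`
    (R : (((a : Fin G) → Fin (d a)) × M) → (((a : Fin G) → Fin (d a)) × M) → ℝ)
    (hR : ∀ x' x : ((a : Fin G) → Fin (d a)) × M, R x' x =
      ∑ a : Fin G,
        if x'.1 = Function.update x.1 a (x.1 a + 1) ∧ x'.2 = u x.2 a (x.1 a)
        then γ a x.2 (x.1 a) else 0)
    -- a stationary distribution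
    (p : (((a : Fin G) → Fin (d a)) × M) → ℝ)
    (hp0 : ∀ x, 0 ≤ p x) (hp1 : ∑ x, p x = 1)
    (hpstat : ctmcRateMatrix R *ᵥ p = 0)
    -- arbitrary real weights on the jumps
    (w : (((a : Fin G) → Fin (d a)) × M) → (((a : Fin G) → Fin (d a)) × M) → ℝ)
    -- convergence of the improper integral defining the noise, and positivity of the noise
    (hconv : ctmcNoiseConv R p)
    (hD : 0 < ctmcNoise R w p) :
    ctmcAvgCurrent R w p ^ 2 / ctmcNoise R w p ≤
      Finset.univ.sup' Finset.univ_nonempty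
        (fun mi : M × ((a : Fin G) → Fin (d a)) => ∑ a, γ a mi.1 (mi.2 a)) := by
  exact snr_main Jt hJtsub d hd γ hγ u R hR p hp0 hp1 hpstat w hconv hD
end

section
/- Let G ≥ 1 and γ_1,…,γ_G ≥ 0 with Γ := Σ_{a=1}^G γ_a > 0. Consider the continuous-time Markov chain on {0,1}^G in which, from every state c and for every a ∈ {1,…,G}, the a-th bit of c flips at rate γ_a (independently of the current state), so that every escape rate equals Γ. Then for any stationary distribution p of this chain, the integrated current assigning weight 1 to every jump satisfies: Cp = Γ·p, the improper integral appearing in the definition of the noise applied to Cp vanishes, and F = Γ and D = Γ, hence S = F²/D = Γ. Consequently, for any feedback policy as in Theorem 1 (i.e., data G, M, J̃, γ^{(a)}, u as there) whose maximal total rate max_{m∈M} max_{i∈{0,1}^G} Σ_{a=1}^G γ^{(a)}_{i_a}(m) is positive, choosing a maximizer (m*, i*) and setting γ_a = γ^{(a)}_{i*_a}(m*) produces a constant feedback policy (jump rates independent of the memory state and of the configuration) together with an integrated current whose asymptotic signal-to-noise ratio equals max_{m∈M} max_{i∈{0,1}^G} Σ_{a=1}^G γ^{(a)}_{i_a}(m),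 so the bound of Theorem 1 is attained with equality. -/
open Matrix MeasureTheory

lemma exp_mulVec_fixed' {V : Type} [Fintype V] [DecidableEq V] (A : Matrix V V ℝ)
    (v : V → ℝ) (hv : A *ᵥ v = 0) : NormedSpace.exp A *ᵥ v = v := by
  letI : SeminormedRing (Matrix V V ℝ) := Matrix.linftyOpSemiNormedRing
  letI : NormedRing (Matrix V V ℝ) := Matrix.linftyOpNormedRing
  letI : NormedAlgebra ℝ (Matrix V V ℝ) := Matrix.linftyOpNormedAlgebra
  have hpow : ∀ n : ℕ, n ≠ 0 → A ^ n *ᵥ v = 0 := by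
    intro n hn
    obtain ⟨k, rfl⟩ := Nat.exists_eq_succ_of_ne_zero hn
    induction k with
    | zero => simpa using hv
    | succ m ih => rw [pow_succ, ← Matrix.mulVec_mulVec, hv, Matrix.mulVec_zero]
  let f : Matrix V V ℝ →ₗ[ℝ] (V → ℝ) :=
    { toFun := fun M => M *ᵥ v
      map_add' := fun M N => Matrix.add_mulVec M N v
      map_smul' := fun c M => by simp [Matrix.smul_mulVec] }
  have hf : ∀ M : Matrix V V ℝ, f M = M *ᵥ v := fun _ => rfl
  have hc : Continuous f := LinearMap.continuous_of_finiteDimensional f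
  have hs : Summable fun n : ℕ => (n.factorial : ℝ)⁻¹ • A ^ n :=
    NormedSpace.expSeries_summable' A
  have hmap := hs.hasSum.map f hc
  rw [NormedSpace.exp_eq_tsum (𝕂 := ℝ)]
  have heq : (f (∑' n : ℕ, (n.factorial : ℝ)⁻¹ • A ^ n) : V → ℝ)
      = ∑' n : ℕ, f ((n.factorial : ℝ)⁻¹ • A ^ n) := hmap.tsum_eq.symm
  rw [← hf, heq, tsum_eq_single 0]
  · rw [hf]; simp
  · intro n hn
    rw [hf, Matrix.smul_mulVec, hpow n hn, smul_zero]

/-- **The bound of Theorem 1 is attained by a constant feedback policy.**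
Given `G ≥ 1` and a feedback policy (data `M`, `J̃`, `γpol`, `u` as in Theorem 1) whose maximal
total rate `mx = max_{m∈M} max_{i∈{0,1}^G} Σₐ γpol⁽ᵃ⁾_{iₐ}(m)` is positive, choose a maximizer
`(m*, i*)` and set `γₐ = γpol⁽ᵃ⁾_{i*ₐ}(m*)`, so that `γₐ ≥ 0` and `Γ = Σₐ γₐ = mx > 0`.
Consider the continuous-time Markov chain on `{0,1}^G` in which, from every state `c` and for
every `a`, the `a`-th bit flips at rate `γₐ` (independently of the current state), so every
escape rate equals `Γ`. Then for any stationary distribution `p` and the integrated current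
assigning weight `1` to every jump: `Cp = Γ·p`; the improper integral appearing in the
definition of the noise applied to `Cp` converges and vanishes; `F = Γ` and `D = Γ`;
hence `S = F²/D = Γ = mx`, attaining the bound of Theorem 1 with equality. -/
theorem classical_snr_bound_attained
    (G : ℕ) (hG : 1 ≤ G)
    (M : Type) [Fintype M] [DecidableEq M] [Nonempty M]
    (Jt : Set ℝ) (hJtne : Jt.Nonempty) (hJtsub : Jt ⊆ Set.Ici 0)
    (γpol : Fin G → M → Bool → ℝ) (hγpol : ∀ a m i, γpol a m i ∈ Jt)
    (u : M → Fin G → Bool → M)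
    -- the maximal total rate of the policy, assumed positive
    (mx : ℝ)
    (hmx : mx = Finset.univ.sup' Finset.univ_nonempty
        (fun mi : M × (Fin G → Bool) => ∑ a, γpol a mi.1 (mi.2 a)))
    (hmxpos : 0 < mx)
    -- a maximizer `(m*, i*)` and the corresponding constant rates
    (mstar : M) (istar : Fin G → Bool)
    (γ : Fin G → ℝ) (hγdef : ∀ a, γ a = γpol a mstar (istar a))
    (hattain : ∑ a, γ a = mx)
    -- the constant-policy chain on `{0,1}^G`: bit `a` flips at rate `γₐ` from every state
    (R : (Fin G → Bool) → (Fin G → Bool) → ℝ)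
    (hR : ∀ c' c : Fin G → Bool, R c' c =
      ∑ a : Fin G, if c' = Function.update c a (!(c a)) then γ a else 0)
    -- a stationary distribution
    (p : (Fin G → Bool) → ℝ)
    (hp0 : ∀ c, 0 ≤ p c) (hp1 : ∑ c, p c = 1)
    (hpstat : ctmcRateMatrix R *ᵥ p = 0) :
    -- every escape rate equals Γ = Σₐ γₐ
    (∀ c : Fin G → Bool, (∑ k, if k = c then (0 : ℝ) else R k c) = ∑ a, γ a)
    -- `Cp = Γ·p` for the current counting every jump with weight 1
    ∧ ctmcCurrentMatrix R (fun _ _ => 1) *ᵥ p = (∑ a, γ a) • p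
    -- the improper noise integral applied to `Cp` converges entrywise and vanishes
    ∧ (∀ j, IntegrableOn
        (fun τ : ℝ => (ctmcNoiseIntegrand R p τ *ᵥ
          (ctmcCurrentMatrix R (fun _ _ => 1) *ᵥ p)) j) (Set.Ioi 0))
    ∧ (∀ j, (∫ τ in Set.Ioi (0 : ℝ), (ctmcNoiseIntegrand R p τ *ᵥ
          (ctmcCurrentMatrix R (fun _ _ => 1) *ᵥ p)) j) = 0)
    -- `F = Γ`
    ∧ ctmcAvgCurrent R (fun _ _ => 1) p = ∑ a, γ a
    -- `D = Γ` (noise computed with the vanishing integral term)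
    ∧ ((fun _ => (1 : ℝ)) ⬝ᵥ (ctmcCurrentMatrix R (fun _ _ => (1 : ℝ) ^ 2) *ᵥ p)
        + 2 * ((fun _ => (1 : ℝ)) ⬝ᵥ (ctmcCurrentMatrix R (fun _ _ => 1) *ᵥ
            (fun j => ∫ τ in Set.Ioi (0 : ℝ), (ctmcNoiseIntegrand R p τ *ᵥ
              (ctmcCurrentMatrix R (fun _ _ => 1) *ᵥ p)) j))) = ∑ a, γ a)
    -- hence `S = F²/D = mx`: the bound of Theorem 1 is attained with equality
    ∧ ctmcAvgCurrent R (fun _ _ => 1) p ^ 2 /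
        ((fun _ => (1 : ℝ)) ⬝ᵥ (ctmcCurrentMatrix R (fun _ _ => (1 : ℝ) ^ 2) *ᵥ p)
          + 2 * ((fun _ => (1 : ℝ)) ⬝ᵥ (ctmcCurrentMatrix R (fun _ _ => 1) *ᵥ
              (fun j => ∫ τ in Set.Ioi (0 : ℝ), (ctmcNoiseIntegrand R p τ *ᵥ
                (ctmcCurrentMatrix R (fun _ _ => 1) *ᵥ p)) j)))) = mx := by
  -- notation
  set Γ : ℝ := ∑ a, γ a with hΓ
  -- escape rates
  have hesc : ∀ c : Fin G → Bool, (∑ k, if k = c then (0 : ℝ) else R k c) = Γ := by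
    intro c
    have hflip : ∀ a : Fin G, Function.update c a (!(c a)) ≠ c := by
      intro a h
      have := congrFun h a
      simp at this
    calc ∑ k, (if k = c then (0:ℝ) else R k c)
        = ∑ k, ∑ a : Fin G, (if k = Function.update c a (!(c a)) then γ a else 0) := by
          apply Finset.sum_congr rfl
          intro k _
          by_cases hk : k = c
          · subst hk
            rw [if_pos rfl]
            symm
            apply Finset.sum_eq_zero
            intro a _
            rw [if_neg (fun h => hflip a h.symm)]
          · rw [if_neg hk, hR]
      _ = ∑ a : Fin G, ∑ k, (if k = Function.update c a (!(c a)) then γ a else 0) :=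
          Finset.sum_comm
      _ = Γ := by
          apply Finset.sum_congr rfl
          intro a _
          simp [Finset.sum_ite_eq]
  -- Cp = Γ • p
  have hCp : ctmcCurrentMatrix R (fun _ _ => 1) *ᵥ p = Γ • p := by
    funext j
    have hL : (ctmcRateMatrix R *ᵥ p) j = 0 := by rw [hpstat]; rfl
    have key : (ctmcCurrentMatrix R (fun _ _ => 1) *ᵥ p) j
        = (ctmcRateMatrix R *ᵥ p) j + Γ * p j := by
      simp only [ctmcCurrentMatrix, ctmcRateMatrix, Matrix.mulVec, dotProduct,
        Matrix.of_apply, one_mul]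
      have h2 : Γ * p j
          = ∑ i, (if j = i then (∑ k, if k = i then (0:ℝ) else R k i) else 0) * p i := by
        simp [ite_mul, Finset.sum_ite_eq, hesc j]
      rw [h2, ← Finset.sum_add_distrib]
      apply Finset.sum_congr rfl
      intro i _
      by_cases h : j = i <;> simp [h]
    rw [key, hL, zero_add]
    rfl
  -- vecMulVec p 1 fixes p
  have hvm : Matrix.vecMulVec p (fun _ => (1:ℝ)) *ᵥ p = p := by
    funext j
    simp [Matrix.mulVec, Matrix.vecMulVec_apply, dotProduct, ← Finset.mul_sum, hp1]
  -- the noise integrand kills Cp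
  have hzero : ∀ τ : ℝ, ctmcNoiseIntegrand R p τ *ᵥ
      (ctmcCurrentMatrix R (fun _ _ => 1) *ᵥ p) = 0 := by
    intro τ
    rw [hCp]
    unfold ctmcNoiseIntegrand
    rw [Matrix.sub_mulVec, Matrix.mulVec_smul, Matrix.mulVec_smul]
    have h1 : (τ • ctmcRateMatrix R) *ᵥ p = 0 := by
      rw [Matrix.smul_mulVec, hpstat, smul_zero]
    rw [exp_mulVec_fixed' _ _ h1, hvm]
    simp
  have hint0 : ∀ j, (∫ τ in Set.Ioi (0 : ℝ), (ctmcNoiseIntegrand R p τ *ᵥ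
      (ctmcCurrentMatrix R (fun _ _ => 1) *ᵥ p)) j) = 0 := by
    intro j
    have : (fun τ : ℝ => (ctmcNoiseIntegrand R p τ *ᵥ
        (ctmcCurrentMatrix R (fun _ _ => 1) *ᵥ p)) j) = fun _ => 0 := by
      funext τ
      rw [hzero τ]
      rfl
    rw [this]
    simp
  -- F = Γ
  have hF : ctmcAvgCurrent R (fun _ _ => 1) p = Γ := by
    unfold ctmcAvgCurrent
    rw [hCp]
    simp [dotProduct, ← Finset.mul_sum, hp1]
  -- integral vector is zero
  have hintvec : (fun j => ∫ τ in Set.Ioi (0 : ℝ), (ctmcNoiseIntegrand R p τ *ᵥ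
      (ctmcCurrentMatrix R (fun _ _ => 1) *ᵥ p)) j) = (0 : (Fin G → Bool) → ℝ) := by
    funext j
    exact hint0 j
  -- C₂ = C since 1² = 1
  have hw2 : (fun _ _ : Fin G → Bool => (1:ℝ) ^ 2) = (fun _ _ => (1:ℝ)) := by
    funext _ _
    norm_num
  have hD : ((fun _ => (1 : ℝ)) ⬝ᵥ (ctmcCurrentMatrix R (fun _ _ => (1 : ℝ) ^ 2) *ᵥ p)
      + 2 * ((fun _ => (1 : ℝ)) ⬝ᵥ (ctmcCurrentMatrix R (fun _ _ => 1) *ᵥ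
          (fun j => ∫ τ in Set.Ioi (0 : ℝ), (ctmcNoiseIntegrand R p τ *ᵥ
            (ctmcCurrentMatrix R (fun _ _ => 1) *ᵥ p)) j)))) = Γ := by
    rw [hw2, hintvec, hCp, Matrix.mulVec_zero]
    simp [dotProduct, ← Finset.mul_sum, hp1]
  have hΓmx : Γ = mx := hattain
  have hΓpos : (0:ℝ) < Γ := hΓmx ▸ hmxpos
  refine ⟨hesc, hCp, ?_, hint0, hF, hD, ?_⟩
  · intro j
    have : (fun τ : ℝ => (ctmcNoiseIntegrand R p τ *ᵥ
        (ctmcCurrentMatrix R (fun _ _ => 1) *ᵥ p)) j) = fun _ => 0 := by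
      funext τ
      rw [hzero τ]
      rfl
    rw [this]
    exact integrableOn_zero
  · rw [hF, hD, pow_two, mul_div_assoc, div_self hΓpos.ne', mul_one]
    exact hΓmx
end

section
/- Let A ∈ ℂ^{N×N} and suppose there exist vectors v, w ∈ ℂ^N with A·v = 0, wᴴ·A = 0 and wᴴ·v = 1, that the kernel of A is one-dimensional and equals the kernel of A² (so ker(A²) = ker(A) = span{v}), and that every nonzero eigenvalue of A has strictly negative real part. Then the improper integral A⁺ := ∫₀^∞ (v·wᴴ − e^{Aτ}) dτ converges entrywise, and A⁺ is the group inverse of A, i.e., A·A⁺·A = A, A⁺·A·A⁺ = A⁺ and A·A⁺ = A⁺·A. -/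
open Matrix MeasureTheory

/-- The improper integral `A⁺ = ∫₀^∞ (v·wᴴ − e^{Aτ}) dτ`, computed entrywise. -/
noncomputable def groupInverseIntegral {N : Type} [Fintype N] [DecidableEq N]
    (A : Matrix N N ℂ) (v w : N → ℂ) : Matrix N N ℂ :=
  Matrix.of fun i j =>
    ∫ τ in Set.Ioi (0 : ℝ), (Matrix.vecMulVec v (star w) - NormedSpace.exp ((τ : ℂ) • A)) i j

namespace GroupInvAux
open NormedSpace Complex Polynomial Filter Set
variable {N : Type} [Fintype N] [DecidableEq N]

/-! ### Elementary algebra of rank-one matrices -/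

theorem vecMulVec_mulVec (v u x : N → ℂ) :
    Matrix.vecMulVec v u *ᵥ x = (u ⬝ᵥ x) • v := by
  ext i
  simp [Matrix.mulVec, Matrix.vecMulVec_apply, dotProduct, Finset.mul_sum, mul_assoc,
    mul_comm, mul_left_comm]

theorem mul_vecMulVec (A : Matrix N N ℂ) (v u : N → ℂ) :
    A * Matrix.vecMulVec v u = Matrix.vecMulVec (A *ᵥ v) u := by
  ext i j
  simp only [Matrix.mul_apply, Matrix.vecMulVec_apply, Matrix.mulVec, dotProduct,
    Finset.sum_mul]
  exact Finset.sum_congr rfl fun k _ => by ring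

theorem vecMulVec_mul (A : Matrix N N ℂ) (v u : N → ℂ) :
    Matrix.vecMulVec v u * A = Matrix.vecMulVec v (Matrix.vecMul u A) := by
  ext i j
  simp only [Matrix.mul_apply, Matrix.vecMulVec_apply, Matrix.vecMul, dotProduct,
    Finset.mul_sum]
  exact Finset.sum_congr rfl fun k _ => by ring

/-! ### Analytic facts proved with the `L∞` operator norm -/

section analytic
attribute [local instance] Matrix.linftyOpNormedRing Matrix.linftyOpNormedAlgebra

noncomputable def entryCLM (C : Matrix N N ℂ) (i j : N) : Matrix N N ℂ →L[ℂ] ℂ :=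
  LinearMap.toContinuousLinearMap
    { toFun := fun M => (C * M) i j
      map_add' := by intro x y; simp [Matrix.mul_add]
      map_smul' := by intro c x; simp [Matrix.mul_smul] }

theorem hasDerivAt_entry (B C : Matrix N N ℂ) (t : ℝ) (i j : N) :
    HasDerivAt (fun τ : ℝ => (C * NormedSpace.exp ((τ:ℂ) • B)) i j)
      ((C * (NormedSpace.exp ((t:ℂ) • B) * B)) i j) t := by
  have h : HasDerivAt (fun τ : ℝ => NormedSpace.exp ((τ:ℂ) • B)) (NormedSpace.exp ((t:ℂ) • B) * B) t := by
    exact (HasDerivAt.scomp (𝕜 := ℝ) t (hasDerivAt_exp_smul_const B (t:ℂ))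
      Complex.ofRealCLM.hasDerivAt).congr_deriv (by simp only [Complex.ofRealCLM_apply, Complex.ofReal_one, one_smul]; rfl)
  have h2 : HasFDerivAt (fun M : Matrix N N ℂ => entryCLM C i j M)
      ((entryCLM C i j).restrictScalars ℝ) (NormedSpace.exp ((t:ℂ) • B)) :=
    ((entryCLM C i j).hasFDerivAt).restrictScalars ℝ
  have := h2.comp_hasDerivAt t h
  exact this

theorem exp_commute (B : Matrix N N ℂ) (t : ℂ) : NormedSpace.exp (t • B) * B = B * NormedSpace.exp (t • B) :=
  (((Commute.refl B).smul_left t).exp_left).eq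

theorem exp_mul_right {X P : Matrix N N ℂ} {c : ℂ} (h : X * P = c • P) (τ : ℂ) :
    NormedSpace.exp (τ • X) * P = Complex.exp (τ * c) • P := by
  have hpow : ∀ n : ℕ, (τ • X) ^ n * P = ((τ * c) ^ n) • P := by
    intro n
    induction n with
    | zero => simp
    | succ n ih =>
      rw [pow_succ, mul_assoc, smul_mul_assoc, h, mul_smul_comm, mul_smul_comm, ih]
      match_scalars; ring
  rw [exp_eq_tsum ℂ]
  beta_reduce
  erw [← (expSeries_summable' (𝕂 := ℂ) (τ • X)).tsum_mul_right]
  have h2 : ∀ n : ℕ, ((n.factorial : ℂ)⁻¹ • (τ • X) ^ n) * P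
      = ((n.factorial : ℂ)⁻¹ • (τ * c) ^ n) • P := by
    intro n; rw [smul_mul_assoc, hpow n, smul_smul, smul_eq_mul]
  erw [tsum_congr h2, Summable.tsum_smul_const (expSeries_summable' (𝕂 := ℂ) (τ * c)), Complex.exp_eq_exp_ℂ,
    exp_eq_tsum ℂ]

theorem mul_exp_left {X P : Matrix N N ℂ} {c : ℂ} (h : P * X = c • P) (τ : ℂ) :
    P * NormedSpace.exp (τ • X) = Complex.exp (τ * c) • P := by
  have hpow : ∀ n : ℕ, P * (τ • X) ^ n = ((τ * c) ^ n) • P := by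
    intro n
    induction n with
    | zero => simp
    | succ n ih =>
      rw [pow_succ, ← mul_assoc, ih, smul_mul_assoc, mul_smul_comm, h]
      match_scalars; ring
  rw [exp_eq_tsum ℂ]
  beta_reduce
  erw [← (expSeries_summable' (𝕂 := ℂ) (τ • X)).tsum_mul_left]
  have h2 : ∀ n : ℕ, P * ((n.factorial : ℂ)⁻¹ • (τ • X) ^ n)
      = ((n.factorial : ℂ)⁻¹ • (τ * c) ^ n) • P := by
    intro n; rw [mul_smul_comm, hpow n, smul_smul, smul_eq_mul]
  erw [tsum_congr h2, Summable.tsum_smul_const (expSeries_summable' (𝕂 := ℂ) (τ * c)), Complex.exp_eq_exp_ℂ,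
    exp_eq_tsum ℂ]

theorem exp_idem {P : Matrix N N ℂ} (h : P * P = P) (τ : ℂ) :
    NormedSpace.exp (τ • P) = 1 + (Complex.exp τ - 1) • P := by
  have hpow : ∀ n : ℕ, (τ • P) ^ (n + 1) = (τ ^ (n+1)) • P := by
    intro n
    induction n with
    | zero => simp
    | succ n ih =>
      rw [pow_succ, ih, smul_mul_assoc, mul_smul_comm, h, smul_smul]
      match_scalars; ring
  rw [exp_eq_tsum ℂ]
  beta_reduce
  erw [Summable.tsum_eq_zero_add (expSeries_summable' (𝕂 := ℂ) (τ • P))]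
  simp only [pow_zero, Nat.factorial_zero, Nat.cast_one, inv_one, one_smul]
  congr 1
  have h2 : ∀ n : ℕ, (((n+1).factorial : ℂ)⁻¹ • (τ • P) ^ (n+1))
      = (((n+1).factorial : ℂ)⁻¹ • τ ^ (n+1)) • P := by
    intro n; rw [hpow n, smul_smul, smul_eq_mul]
  erw [tsum_congr h2, Summable.tsum_smul_const]
  · congr 1
    have := Summable.tsum_eq_zero_add (f := fun n : ℕ => ((n.factorial : ℂ)⁻¹ • τ ^ n))
      (expSeries_summable' (𝕂 := ℂ) τ)
    simp only [pow_zero, Nat.factorial_zero, Nat.cast_one, inv_one, one_smul] at this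
    rw [Complex.exp_eq_exp_ℂ, exp_eq_tsum ℂ]
    beta_reduce
    rw [this]
    abel
  · have := (expSeries_summable' (𝕂 := ℂ) τ)
    rw [← summable_nat_add_iff 1] at this
    exact this

theorem matrix_exp_add_comm {X Y : Matrix N N ℂ} (h : Commute X Y) :
    NormedSpace.exp (X + Y) = NormedSpace.exp X * NormedSpace.exp Y :=
  NormedSpace.exp_add_of_commute h

end analytic

theorem continuous_entry (B C : Matrix N N ℂ) (i j : N) :
    Continuous (fun τ : ℝ => (C * NormedSpace.exp ((τ:ℂ) • B)) i j) :=
  continuous_iff_continuousAt.2 fun t => (hasDerivAt_entry B C t i j).continuousAt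

theorem int_exp_mul {c : ℝ} (hc : c ≠ 0) (τ : ℝ) :
    ∫ s in (0:ℝ)..τ, Real.exp (c * s) = (Real.exp (c * τ) - 1) / c := by
  have D : ∀ x : ℝ, HasDerivAt (fun y : ℝ => Real.exp (c * y) / c) (Real.exp (c * x)) x := by
    intro x
    rw [← mul_div_cancel_right₀ (Real.exp (c * x)) hc]
    have := ((Real.hasDerivAt_exp (c * x)).comp x ((hasDerivAt_id x).const_mul c)).div_const c
    simpa [Function.comp] using this
  rw [intervalIntegral.integral_eq_sub_of_hasDerivAt (fun x _ => D x)
    ((Real.continuous_exp.comp (continuous_const.mul continuous_id)).intervalIntegrable 0 τ)]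
  rw [mul_zero, Real.exp_zero]
  ring
theorem decay (B : Matrix N N ℂ) {δ : ℝ} (hδ : 0 < δ) :
    ∀ L : List ℂ, (∀ μ ∈ L, μ.re < -δ) → ∀ C : Matrix N N ℂ,
      C * (L.map (fun μ => B - μ • 1)).prod = 0 →
      ∃ K : ℝ, 0 ≤ K ∧ ∀ τ : ℝ, 0 ≤ τ → ∀ i j,
        ‖(C * NormedSpace.exp ((τ:ℂ) • B)) i j‖ ≤ K * Real.exp (-δ * τ) := by
  intro L
  induction L with
  | nil =>
    intro _ C hC
    simp only [List.map_nil, List.prod_nil, mul_one] at hC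
    exact ⟨0, le_rfl, by simp [hC]⟩
  | cons μ L ih =>
    intro hroots C hC
    set C' : Matrix N N ℂ := C * (B - μ • 1) with hC'def
    have hC' : C' * (L.map (fun ν => B - ν • 1)).prod = 0 := by
      rw [hC'def, mul_assoc]
      simpa [List.prod_cons] using hC
    obtain ⟨K, hK0, hK⟩ := ih (fun ν hν => hroots ν (List.mem_cons_of_mem _ hν)) C' hC'
    have hμ : μ.re < -δ := hroots μ List.mem_cons_self
    set c : ℝ := -μ.re - δ with hcdef
    have hcpos : 0 < c := by simp only [hcdef]; linarith
    refine ⟨(∑ i, ∑ j, ‖C i j‖) + K / c, by positivity, ?_⟩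
    intro τ hτ i j
    -- the integrand after multiplying by e^{-μ t}
    set G : ℝ → ℂ := fun s => Complex.exp (-(μ * s)) * ((C' * NormedSpace.exp ((s:ℂ) • B)) i j) with hGdef
    have hGcont : Continuous G := by
      apply Continuous.mul
      · exact Complex.continuous_exp.comp (by continuity)
      · exact continuous_entry B C' i j
    have hder : ∀ t : ℝ, HasDerivAt
        (fun s : ℝ => Complex.exp (-(μ * s)) * ((C * NormedSpace.exp ((s:ℂ) • B)) i j)) (G t) t := by
      intro t
      have h1 : HasDerivAt (fun s : ℝ => Complex.exp (-(μ * s)))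
          (-μ * Complex.exp (-(μ * t))) t := by
        have hz : HasDerivAt (fun z : ℂ => Complex.exp (-(μ * z)))
            (-μ * Complex.exp (-(μ * (t:ℂ)))) (t:ℂ) := by
          have := (Complex.hasDerivAt_exp (-(μ * (t:ℂ)))).comp (t:ℂ)
            (((hasDerivAt_id ((t:ℂ))).const_mul μ).neg)
          simpa [Function.comp_def, Pi.neg_def, mul_comm] using this
        exact hz.comp_ofReal
      have h2 := hasDerivAt_entry B C t i j
      have := h1.mul h2
      refine this.congr_deriv ?_
      have hsplit : (C' * NormedSpace.exp ((t:ℂ) • B)) i j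
          = (C * (NormedSpace.exp ((t:ℂ) • B) * B)) i j - μ * ((C * NormedSpace.exp ((t:ℂ) • B)) i j) := by
        have e1 : C' * NormedSpace.exp ((t:ℂ) • B)
            = C * B * NormedSpace.exp ((t:ℂ) • B) - μ • (C * NormedSpace.exp ((t:ℂ) • B)) := by
          rw [hC'def, Matrix.mul_sub, mul_smul_comm, mul_one, Matrix.sub_mul, smul_mul_assoc]
        rw [e1, Matrix.sub_apply, Matrix.smul_apply, smul_eq_mul, exp_commute, ← mul_assoc]
      rw [hGdef]
      simp only [hsplit]
      ring
    have hFTC := intervalIntegral.integral_eq_sub_of_hasDerivAt (f' := G)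
      (fun t _ => hder t) (hGcont.intervalIntegrable 0 τ)
    -- value at 0
    have h0 : Complex.exp (-(μ * ((0:ℝ):ℂ))) * ((C * NormedSpace.exp (((0:ℝ):ℂ) • B)) i j) = C i j := by
      simp
    rw [h0] at hFTC
    -- solve for the entry
    have hFval : (C * NormedSpace.exp ((τ:ℂ) • B)) i j
        = Complex.exp (μ * τ) * (C i j + ∫ s in (0:ℝ)..τ, G s) := by
      rw [hFTC]
      have harr : C i j + (Complex.exp (-(μ * (τ:ℂ))) * ((C * NormedSpace.exp ((τ:ℂ) • B)) i j) - C i j)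
          = Complex.exp (-(μ * (τ:ℂ))) * ((C * NormedSpace.exp ((τ:ℂ) • B)) i j) := by ring
      rw [harr, ← mul_assoc, ← Complex.exp_add]
      simp
    rw [hFval]
    -- bound the integral
    have hbound : ∀ s ∈ Icc (0:ℝ) τ, ‖G s‖ ≤ K * Real.exp (c * s) := by
      intro s hs
      rw [hGdef]
      simp only [norm_mul, Complex.norm_exp]
      have hre : (-(μ * (s:ℂ))).re = -(μ.re * s) := by simp
      rw [hre]
      have := hK s hs.1 i j
      calc Real.exp (-(μ.re * s)) * ‖(C' * NormedSpace.exp ((s:ℂ) • B)) i j‖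
          ≤ Real.exp (-(μ.re * s)) * (K * Real.exp (-δ * s)) := by
            apply mul_le_mul_of_nonneg_left _ (Real.exp_nonneg _)
            exact this
        _ = K * (Real.exp (-(μ.re * s)) * Real.exp (-δ * s)) := by ring
        _ = K * Real.exp (c * s) := by
            rw [← Real.exp_add]
            congr 1
            rw [hcdef]
            ring
    have hIntNorm : ‖∫ s in (0:ℝ)..τ, G s‖ ≤ K / c * Real.exp (c * τ) := by
      calc ‖∫ s in (0:ℝ)..τ, G s‖ ≤ ∫ s in (0:ℝ)..τ, ‖G s‖ :=
            intervalIntegral.norm_integral_le_integral_norm hτ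
        _ ≤ ∫ s in (0:ℝ)..τ, K * Real.exp (c * s) := by
            apply intervalIntegral.integral_mono_on hτ
              (hGcont.norm.intervalIntegrable 0 τ)
              ((continuous_const.mul (Real.continuous_exp.comp
                (continuous_const.mul continuous_id))).intervalIntegrable 0 τ) hbound
        _ = K * ((Real.exp (c * τ) - 1) / c) := by
            rw [intervalIntegral.integral_const_mul, int_exp_mul hcpos.ne']
        _ ≤ K * (Real.exp (c * τ) / c) := by
            apply mul_le_mul_of_nonneg_left _ hK0
            gcongr
            linarith [Real.exp_nonneg (c * τ)]
        _ = K / c * Real.exp (c * τ) := by ring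
    have hCS : ‖C i j‖ ≤ ∑ i', ∑ j', ‖C i' j'‖ := by
      calc ‖C i j‖ ≤ ∑ j', ‖C i j'‖ :=
            Finset.single_le_sum (fun _ _ => norm_nonneg _) (Finset.mem_univ j)
        _ ≤ ∑ i', ∑ j', ‖C i' j'‖ :=
            Finset.single_le_sum (f := fun i' => ∑ j', ‖C i' j'‖)
              (fun _ _ => Finset.sum_nonneg fun _ _ => norm_nonneg _) (Finset.mem_univ i)
    have hexp1 : Real.exp (μ.re * τ) ≤ Real.exp (-δ * τ) :=
      Real.exp_le_exp.2 (mul_le_mul_of_nonneg_right hμ.le hτ)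
    have hexp2 : Real.exp (μ.re * τ) * Real.exp (c * τ) = Real.exp (-δ * τ) := by
      rw [← Real.exp_add]
      congr 1
      rw [hcdef]
      ring
    calc ‖Complex.exp (μ * τ) * (C i j + ∫ s in (0:ℝ)..τ, G s)‖
        = Real.exp (μ.re * τ) * ‖C i j + ∫ s in (0:ℝ)..τ, G s‖ := by
          rw [norm_mul, Complex.norm_exp]
          congr 2
          simp
      _ ≤ Real.exp (μ.re * τ) * (‖C i j‖ + K / c * Real.exp (c * τ)) := by
          apply mul_le_mul_of_nonneg_left _ (Real.exp_nonneg _)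
          exact (norm_add_le _ _).trans (add_le_add_right hIntNorm _)
      _ = ‖C i j‖ * Real.exp (μ.re * τ) + K / c * (Real.exp (μ.re * τ) * Real.exp (c * τ)) := by
          ring
      _ ≤ (∑ i', ∑ j', ‖C i' j'‖) * Real.exp (-δ * τ) + K / c * Real.exp (-δ * τ) := by
          rw [hexp2]
          exact add_le_add (mul_le_mul hCS hexp1 (Real.exp_nonneg _)
            (Finset.sum_nonneg fun _ _ => Finset.sum_nonneg fun _ _ => norm_nonneg _)) le_rfl
      _ = ((∑ i', ∑ j', ‖C i' j'‖) + K / c) * Real.exp (-δ * τ) := by ring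

theorem eig_of_root (B : Matrix N N ℂ) {μ : ℂ} (h : B.charpoly.IsRoot μ) :
    ∃ x : N → ℂ, x ≠ 0 ∧ B *ᵥ x = μ • x := by
  have hdet : (μ • (1 : Matrix N N ℂ) - B).det = 0 := by
    have h1 : eval μ B.charpoly = ((charmatrix B).map (evalRingHom μ)).det := by
      have := RingHom.map_det (evalRingHom μ) (charmatrix B)
      rw [RingHom.mapMatrix_apply] at this
      exact this
    have h2 : (charmatrix B).map (evalRingHom μ) = μ • (1 : Matrix N N ℂ) - B := by
      ext i j
      by_cases hij : i = j <;>
        simp [hij, charmatrix_apply, Matrix.map_apply, Matrix.one_apply, Matrix.smul_apply,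
          Matrix.sub_apply, Matrix.diagonal_apply]
    rw [← h2, ← h1, h]
  obtain ⟨x, hx0, hx⟩ := (Matrix.exists_mulVec_eq_zero_iff).2 hdet
  refine ⟨x, hx0, ?_⟩
  rw [Matrix.sub_mulVec, Matrix.smul_mulVec, Matrix.one_mulVec, sub_eq_zero] at hx
  exact hx.symm

theorem exists_delta (B : Matrix N N ℂ)
    (hroots : ∀ μ : ℂ, B.charpoly.IsRoot μ → μ.re < 0) :
    ∃ δ : ℝ, 0 < δ ∧ ∃ l : List ℂ,
      ((l.map fun μ => B - μ • 1).prod = 0) ∧ ∀ μ ∈ l, μ.re < -δ := by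
  classical
  set l : List ℂ := B.charpoly.roots.toList with hl
  have hmem : ∀ μ ∈ l, B.charpoly.IsRoot μ := by
    intro μ hμ
    rw [hl, Multiset.mem_toList] at hμ
    exact (Polynomial.mem_roots (B.charpoly_monic.ne_zero)).1 hμ
  have hprod : ((l.map fun μ => B - μ • 1).prod = 0) := by
    have hsplit : B.charpoly = (l.map fun a => X - Polynomial.C a).prod := by
      have := (IsAlgClosed.splits B.charpoly).eq_prod_roots_of_monic
        B.charpoly_monic
      rw [this, hl]
      conv_lhs => rw [← Multiset.coe_toList B.charpoly.roots]
      rw [Multiset.map_coe, Multiset.prod_coe]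
    have hCH := B.aeval_self_charpoly
    rw [hsplit] at hCH
    rw [map_list_prod (aeval B)] at hCH
    rw [List.map_map] at hCH
    have hfun : (⇑(aeval B) ∘ fun a : ℂ => X - Polynomial.C a) = fun μ : ℂ => B - μ • 1 := by
      funext a
      simp [Function.comp, Algebra.algebraMap_eq_smul_one]
    rw [hfun] at hCH
    exact hCH
  by_cases hln : l = []
  · exact ⟨1, one_pos, l, hprod, by simp [hln]⟩
  · set S : Finset ℝ := (l.map fun μ => -μ.re).toFinset with hS
    have hSne : S.Nonempty := by
      rw [hS]
      simpa [List.toFinset_nonempty_iff] using hln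
    set m : ℝ := S.min' hSne with hm
    have hmpos : 0 < m := by
      have : m ∈ S := S.min'_mem hSne
      rw [hS, List.mem_toFinset, List.mem_map] at this
      obtain ⟨ν, hν, hvm⟩ := this
      have := hroots ν (hmem ν hν)
      rw [← hvm]
      linarith
    refine ⟨m / 2, by linarith, l, hprod, ?_⟩
    intro μ hμ
    have : m ≤ -μ.re := S.min'_le _ (by rw [hS, List.mem_toFinset, List.mem_map]; exact ⟨μ, hμ, rfl⟩)
    linarith


theorem tendsto_bound {δ : ℝ} (K : ℝ) (hδ : 0 < δ) :
    Filter.Tendsto (fun τ : ℝ => K * Real.exp (-δ * τ)) atTop (nhds 0) := by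
  have h1 : Filter.Tendsto (fun τ : ℝ => -δ * τ) atTop atBot :=
    tendsto_id.const_mul_atTop_of_neg (neg_lt_zero.mpr hδ)
  have h2 := Real.tendsto_exp_atBot.comp h1
  simpa using h2.const_mul K

/-- Integral of a constant multiple of `e^{-τ}` over `(0,∞)`. -/
theorem integral_cexp_neg (p : ℂ) :
    IntegrableOn (fun τ : ℝ => Complex.exp (-(τ:ℂ)) * p) (Ioi 0)
    ∧ ∫ τ in Ioi (0:ℝ), Complex.exp (-(τ:ℂ)) * p = p := by
  have hcont : Continuous (fun τ : ℝ => Complex.exp (-(τ:ℂ)) * p) := by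
    apply Continuous.mul _ continuous_const
    exact Complex.continuous_exp.comp (by continuity)
  have hint : IntegrableOn (fun τ : ℝ => Complex.exp (-(τ:ℂ)) * p) (Ioi 0) := by
    apply Integrable.mono' (g := fun τ : ℝ => ‖p‖ * Real.exp (-1 * τ))
      ((exp_neg_integrableOn_Ioi 0 one_pos).const_mul ‖p‖)
      hcont.aestronglyMeasurable
    refine (ae_restrict_iff' measurableSet_Ioi).2 (Filter.Eventually.of_forall fun τ hτ => ?_)
    rw [norm_mul, Complex.norm_exp]
    have : (-(τ:ℂ)).re = -τ := by simp
    rw [this]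
    rw [mul_comm]
    apply mul_le_mul_of_nonneg_left _ (norm_nonneg p)
    simp
  refine ⟨hint, ?_⟩
  have hder : ∀ t : ℝ, t ∈ Ici (0:ℝ) → HasDerivAt (fun τ : ℝ => -(Complex.exp (-(τ:ℂ)) * p))
      (Complex.exp (-(t:ℂ)) * p) t := by
    intro t _
    have hz : HasDerivAt (fun z : ℂ => -(Complex.exp (-z) * p)) (Complex.exp (-(t:ℂ)) * p) (t:ℂ) := by
      have h1 : HasDerivAt (fun z : ℂ => Complex.exp (-z)) (-Complex.exp (-(t:ℂ))) (t:ℂ) := by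
        have := (Complex.hasDerivAt_exp (-(t:ℂ))).comp (t:ℂ) (hasDerivAt_neg ((t:ℂ)))
        simpa [Function.comp_def, Pi.neg_def] using this
      have := (h1.mul_const p).neg
      simpa [Pi.neg_def] using this
    exact hz.comp_ofReal
  have htend : Filter.Tendsto (fun τ : ℝ => -(Complex.exp (-(τ:ℂ)) * p)) atTop (nhds 0) := by
    rw [← neg_zero]
    apply Filter.Tendsto.neg
    apply squeeze_zero_norm (a := fun τ : ℝ => ‖p‖ * Real.exp (-1 * τ))
    · intro τ
      rw [norm_mul, Complex.norm_exp]
      have : (-(τ:ℂ)).re = -τ := by simp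
      rw [this, mul_comm]
      apply mul_le_mul_of_nonneg_left _ (norm_nonneg p)
      simp
    · exact tendsto_bound ‖p‖ one_pos
  have := integral_Ioi_of_hasDerivAt_of_tendsto' hder hint htend
  rw [this]
  simp


theorem exp_entry_integral (B : Matrix N N ℂ)
    (hroots : ∀ μ : ℂ, B.charpoly.IsRoot μ → μ.re < 0) (hdet : IsUnit B.det) (i j : N) :
    IntegrableOn (fun τ : ℝ => (NormedSpace.exp ((τ:ℂ) • B)) i j) (Ioi 0)
    ∧ ∫ τ in Ioi (0:ℝ), (NormedSpace.exp ((τ:ℂ) • B)) i j = -(B⁻¹ i j) := by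
  obtain ⟨δ, hδ, l, hprod, hl⟩ := exists_delta B hroots
  obtain ⟨K₁, hK₁0, hK₁⟩ := decay B hδ l hl 1 (by rw [hprod, mul_zero])
  obtain ⟨K₂, hK₂0, hK₂⟩ := decay B hδ l hl B⁻¹ (by rw [hprod, mul_zero])
  have hcont : Continuous (fun τ : ℝ => (NormedSpace.exp ((τ:ℂ) • B)) i j) := by
    have := continuous_entry B 1 i j
    simpa [one_mul] using this
  have hint : IntegrableOn (fun τ : ℝ => (NormedSpace.exp ((τ:ℂ) • B)) i j) (Ioi 0) := by
    apply Integrable.mono' (g := fun τ => K₁ * Real.exp (-δ * τ))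
      ((exp_neg_integrableOn_Ioi 0 hδ).const_mul K₁) hcont.aestronglyMeasurable
    refine (ae_restrict_iff' measurableSet_Ioi).2 (Filter.Eventually.of_forall fun τ hτ => ?_)
    have := hK₁ τ (le_of_lt hτ) i j
    simpa [one_mul] using this
  refine ⟨hint, ?_⟩
  have hder : ∀ t ∈ Ici (0:ℝ), HasDerivAt (fun τ : ℝ => (B⁻¹ * NormedSpace.exp ((τ:ℂ) • B)) i j)
      ((NormedSpace.exp ((t:ℂ) • B)) i j) t := by
    intro t _
    have h := hasDerivAt_entry B B⁻¹ t i j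
    have heq : (B⁻¹ * (NormedSpace.exp ((t:ℂ) • B) * B)) = NormedSpace.exp ((t:ℂ) • B) := by
      rw [exp_commute, ← mul_assoc, Matrix.nonsing_inv_mul B hdet, one_mul]
    rwa [heq] at h
  have htend : Filter.Tendsto (fun τ : ℝ => (B⁻¹ * NormedSpace.exp ((τ:ℂ) • B)) i j) atTop (nhds 0) := by
    apply squeeze_zero_norm' ?_ (tendsto_bound K₂ hδ)
    filter_upwards [Filter.eventually_ge_atTop (0:ℝ)] with τ hτ
    exact hK₂ τ hτ i j
  have := integral_Ioi_of_hasDerivAt_of_tendsto' hder hint htend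
  rw [this]
  norm_num

end GroupInvAux

open GroupInvAux NormedSpace Complex Set Filter

/-- **The integral `∫₀^∞ (v·wᴴ − e^{Aτ}) dτ` is the group inverse.** Suppose `A ∈ ℂ^{N×N}`
admits vectors `v, w` with `Av = 0`, `wᴴA = 0` and `wᴴv = 1`, that the kernel of `A` is
one-dimensional, equal to `span{v}` and to the kernel of `A²`, and that every nonzero
eigenvalue of `A` has strictly negative real part. Then the improper integral
`A⁺ = ∫₀^∞ (v·wᴴ − e^{Aτ}) dτ` converges entrywise, and `A⁺` is the group inverse of `A`:
`AA⁺A = A`, `A⁺AA⁺ = A⁺` and `AA⁺ = A⁺A`. -/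
theorem groupInverse_integral
    {N : Type} [Fintype N] [DecidableEq N]
    (A : Matrix N N ℂ) (v w : N → ℂ)
    (hv : A *ᵥ v = 0) (hw : Matrix.vecMul (star w) A = 0) (hwv : star w ⬝ᵥ v = 1)
    (hker : ∀ x : N → ℂ, A *ᵥ x = 0 → ∃ c : ℂ, x = c • v)
    (hker2 : ∀ x : N → ℂ, (A * A) *ᵥ x = 0 → A *ᵥ x = 0)
    (heig : ∀ μ : ℂ, μ ≠ 0 → (∃ x : N → ℂ, x ≠ 0 ∧ A *ᵥ x = μ • x) → μ.re < 0) :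
    (∀ i j, IntegrableOn
        (fun τ : ℝ => (Matrix.vecMulVec v (star w) - NormedSpace.exp ((τ : ℂ) • A)) i j)
        (Set.Ioi 0))
    ∧ A * groupInverseIntegral A v w * A = A
    ∧ groupInverseIntegral A v w * A * groupInverseIntegral A v w = groupInverseIntegral A v w
    ∧ A * groupInverseIntegral A v w = groupInverseIntegral A v w * A := by
  classical
  set P : Matrix N N ℂ := Matrix.vecMulVec v (star w) with hPdef
  set B : Matrix N N ℂ := A - P with hBdef
  have hAP : A * P = 0 := by
    rw [hPdef, GroupInvAux.mul_vecMulVec, hv]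
    ext i j
    simp [Matrix.vecMulVec_apply]
  have hPA : P * A = 0 := by
    rw [hPdef, GroupInvAux.vecMulVec_mul, hw]
    ext i j
    simp [Matrix.vecMulVec_apply]
  have hPP : P * P = P := by
    rw [hPdef, GroupInvAux.mul_vecMulVec, GroupInvAux.vecMulVec_mulVec, hwv, one_smul]
  have hBP : B * P = (-1 : ℂ) • P := by
    rw [hBdef, Matrix.sub_mul, hAP, hPP]
    simp
  have hPB : P * B = (-1 : ℂ) • P := by
    rw [hBdef, Matrix.mul_sub, hPA, hPP]
    simp
  have hABP : A = B + P := by rw [hBdef, sub_add_cancel]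
  -- the fundamental exponential identity
  have hexp : ∀ τ : ℝ, NormedSpace.exp ((τ:ℂ) • A)
      = NormedSpace.exp ((τ:ℂ) • B) + P - Complex.exp (-(τ:ℂ)) • P := by
    intro τ
    have hcomm : Commute ((τ:ℂ) • B) ((τ:ℂ) • P) := by
      apply Commute.smul_left
      apply Commute.smul_right
      show B * P = P * B
      rw [hBP, hPB]
    have hprd : (Complex.exp (τ:ℂ) - 1) * Complex.exp ((τ:ℂ) * (-1))
        = 1 - Complex.exp (-(τ:ℂ)) := by
      rw [sub_mul, one_mul, ← Complex.exp_add]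
      norm_num
    calc NormedSpace.exp ((τ:ℂ) • A) = NormedSpace.exp ((τ:ℂ) • B + (τ:ℂ) • P) := by rw [← smul_add, ← hABP]
      _ = NormedSpace.exp ((τ:ℂ) • B) * NormedSpace.exp ((τ:ℂ) • P) := matrix_exp_add_comm hcomm
      _ = NormedSpace.exp ((τ:ℂ) • B) * (1 + (Complex.exp (τ:ℂ) - 1) • P) := by rw [exp_idem hPP]
      _ = NormedSpace.exp ((τ:ℂ) • B) + (Complex.exp (τ:ℂ) - 1) • (NormedSpace.exp ((τ:ℂ) • B) * P) := by
          rw [Matrix.mul_add, mul_one, mul_smul_comm]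
      _ = NormedSpace.exp ((τ:ℂ) • B) + (Complex.exp (τ:ℂ) - 1) • (Complex.exp ((τ:ℂ) * (-1)) • P) := by
          rw [exp_mul_right hBP]
      _ = NormedSpace.exp ((τ:ℂ) • B) + P - Complex.exp (-(τ:ℂ)) • P := by
          rw [smul_smul, hprd, sub_smul, one_smul]
          abel
  have hint_eq : ∀ τ : ℝ, P - NormedSpace.exp ((τ:ℂ) • A)
      = Complex.exp (-(τ:ℂ)) • P - NormedSpace.exp ((τ:ℂ) • B) := by
    intro τ
    rw [hexp τ]
    abel
  -- spectral facts for B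
  have key : ∀ (μ : ℂ) (x : N → ℂ), x ≠ 0 → B *ᵥ x = μ • x → μ.re < 0 := by
    intro μ x hx0 hx
    have hPx : P *ᵥ x = (star w ⬝ᵥ x) • v := by rw [hPdef, GroupInvAux.vecMulVec_mulVec]
    have hAx : A *ᵥ x = μ • x + (star w ⬝ᵥ x) • v := by
      rw [hABP, Matrix.add_mulVec, hx, hPx]
    have h1 : star w ⬝ᵥ (A *ᵥ x) = 0 := by
      rw [Matrix.dotProduct_mulVec, hw, zero_dotProduct]
    have h2 : star w ⬝ᵥ (A *ᵥ x) = (μ + 1) * (star w ⬝ᵥ x) := by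
      rw [hAx, dotProduct_add, dotProduct_smul, dotProduct_smul, hwv]
      simp [smul_eq_mul]
      ring
    by_cases hc : star w ⬝ᵥ x = 0
    · have hAx' : A *ᵥ x = μ • x := by rw [hAx, hc, zero_smul, add_zero]
      by_cases hμ : μ = 0
      · exfalso
        obtain ⟨c', hcv⟩ := hker x (by rw [hAx', hμ, zero_smul])
        have hwc : star w ⬝ᵥ x = c' := by rw [hcv, dotProduct_smul, hwv, smul_eq_mul, mul_one]
        rw [hc] at hwc
        rw [← hwc, zero_smul] at hcv
        exact hx0 hcv
      · exact heig μ hμ ⟨x, hx0, hAx'⟩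
    · have h3 : (μ + 1) * (star w ⬝ᵥ x) = 0 := by rw [← h2, h1]
      have : μ + 1 = 0 := by
        rcases mul_eq_zero.1 h3 with h | h
        · exact h
        · exact absurd h hc
      have hμ : μ = -1 := by linear_combination this
      rw [hμ]
      norm_num
  have hroots : ∀ μ : ℂ, B.charpoly.IsRoot μ → μ.re < 0 := by
    intro μ hμ
    obtain ⟨x, hx0, hx⟩ := eig_of_root B hμ
    exact key μ x hx0 hx
  have hdet : IsUnit B.det := by
    rw [isUnit_iff_ne_zero]
    intro hdet0
    obtain ⟨x, hx0, hx⟩ := (Matrix.exists_mulVec_eq_zero_iff).2 hdet0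
    have := key 0 x hx0 (by rw [hx, zero_smul])
    norm_num at this
  -- entrywise integrability and value
  have hmain : ∀ i j,
      IntegrableOn (fun τ : ℝ => (P - NormedSpace.exp ((τ:ℂ) • A)) i j) (Ioi 0)
      ∧ ∫ τ in Ioi (0:ℝ), (P - NormedSpace.exp ((τ:ℂ) • A)) i j = P i j + B⁻¹ i j := by
    intro i j
    have hfun : (fun τ : ℝ => (P - NormedSpace.exp ((τ:ℂ) • A)) i j)
        = fun τ : ℝ => Complex.exp (-(τ:ℂ)) * P i j - (NormedSpace.exp ((τ:ℂ) • B)) i j := by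
      funext τ
      rw [hint_eq τ]
      simp [Matrix.sub_apply, Matrix.smul_apply, smul_eq_mul]
    obtain ⟨hi1, hi2⟩ := integral_cexp_neg (P i j)
    obtain ⟨hj1, hj2⟩ := exp_entry_integral B hroots hdet i j
    constructor
    · rw [hfun]
      exact hi1.sub hj1
    · rw [hfun, integral_sub hi1 hj1, hi2, hj2]
      ring
  -- identification of the integral
  have hG : groupInverseIntegral A v w = P + B⁻¹ := by
    ext i j
    show (∫ τ in Ioi (0:ℝ), (P - NormedSpace.exp ((τ:ℂ) • A)) i j) = (P + B⁻¹) i j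
    rw [(hmain i j).2, Matrix.add_apply]
  -- inverse identities
  have hBBi : B * B⁻¹ = 1 := Matrix.mul_nonsing_inv B hdet
  have hBiB : B⁻¹ * B = 1 := Matrix.nonsing_inv_mul B hdet
  have hBiP : B⁻¹ * P = (-1 : ℂ) • P := by
    have h1 : B⁻¹ * (B * P) = P := by rw [← mul_assoc, hBiB, one_mul]
    rw [hBP] at h1
    rw [mul_smul_comm] at h1
    have := congrArg (fun M => (-1 : ℂ) • M) h1
    simpa using this
  have hPBi : P * B⁻¹ = (-1 : ℂ) • P := by
    have h1 : (P * B) * B⁻¹ = P := by rw [mul_assoc, hBBi, mul_one]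
    rw [hPB, smul_mul_assoc] at h1
    have := congrArg (fun M => (-1 : ℂ) • M) h1
    simpa using this
  have hAG : A * groupInverseIntegral A v w = 1 - P := by
    rw [hG, hABP, Matrix.add_mul, Matrix.mul_add, Matrix.mul_add, hBP, hPP, hPBi, hBBi]
    simp
    abel
  have hGA : groupInverseIntegral A v w * A = 1 - P := by
    rw [hG, hABP, Matrix.mul_add, Matrix.add_mul, Matrix.add_mul, hPB, hPP, hBiB, hBiP]
    simp
    abel
  refine ⟨?_, ?_, ?_, ?_⟩
  · intro i j
    exact (hmain i j).1
  · rw [hAG, Matrix.sub_mul, one_mul, hPA, sub_zero]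
  · rw [hGA, hG, Matrix.sub_mul, one_mul, Matrix.mul_add, hPP, hPBi]
    simp only [neg_one_smul]
    abel
  · rw [hAG, hGA]
end
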